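/- arXiv:1705.07160 — 3 statements merged into one kernel-verified Lean document; each statement's English description precedes it below -/
import Mathlib

section
/- Let d ≥ 3, n = (n₁,…,n_d) with each n_j ≥ 1, and F = ℝ or ℂ. Then α(n,F)·β(n,F) = 1. -/
noncomputable section


/-- The Euclidean norm of a vector in `𝕜^k`. -/
def vnorm {𝕜 : Type*} [RCLike 𝕜] {k : ℕ} (x : Fin k → 𝕜) : ℝ :=
  Real.sqrt (∑ i, ‖x i‖ ^ 2)

/-- The rank-one tensor `x₁ ⊗ ⋯ ⊗ x_d`. -/
def rankOne {𝕜 : Type*} [RCLike 𝕜] {d : ℕ} {n : Fin d → ℕ}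
    (x : ∀ j, Fin (n j) → 𝕜) : (∀ j, Fin (n j)) → 𝕜 :=
  fun i => ∏ j, x j (i j)

/-- The standard inner product `⟨T, Y⟩ = ∑ tᵢ · conj yᵢ` of tensors. -/
def tinner {𝕜 : Type*} [RCLike 𝕜] {d : ℕ} {n : Fin d → ℕ}
    (T Y : (∀ j, Fin (n j)) → 𝕜) : 𝕜 :=
  ∑ i, T i * (starRingEnd 𝕜) (Y i)

/-- The Hilbert–Schmidt norm of a tensor. -/
def hsNorm {𝕜 : Type*} [RCLike 𝕜] {d : ℕ} {n : Fin d → ℕ}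
    (T : (∀ j, Fin (n j)) → 𝕜) : ℝ :=
  Real.sqrt (∑ i, ‖T i‖ ^ 2)

section basic
variable {𝕜 : Type*} [RCLike 𝕜] {d : ℕ} {n : Fin d → ℕ}

/-- view a tensor as element of Euclidean space -/
def toE (T : (∀ j, Fin (n j)) → 𝕜) : EuclideanSpace 𝕜 (∀ j, Fin (n j)) :=
  (WithLp.equiv 2 _).symm T

lemma toE_apply (T : (∀ j, Fin (n j)) → 𝕜) (i : ∀ j, Fin (n j)) : toE T i = T i := rfl

lemma hsNorm_eq (T : (∀ j, Fin (n j)) → 𝕜) : hsNorm T = ‖toE T‖ := by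
  rw [EuclideanSpace.norm_eq]; rfl

lemma tinner_eq (T Y : (∀ j, Fin (n j)) → 𝕜) :
    tinner T Y = (inner 𝕜 (toE Y) (toE T) : 𝕜) := by
  rw [PiLp.inner_apply]
  simp [tinner, RCLike.inner_apply, toE_apply, mul_comm]

lemma tinner_norm_le (T Y : (∀ j, Fin (n j)) → 𝕜) :
    ‖tinner T Y‖ ≤ hsNorm T * hsNorm Y := by
  rw [tinner_eq, hsNorm_eq, hsNorm_eq, mul_comm]
  exact norm_inner_le_norm _ _

lemma tinner_self (T : (∀ j, Fin (n j)) → 𝕜) : ‖tinner T T‖ = hsNorm T ^ 2 := by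
  rw [tinner_eq, inner_self_eq_norm_sq_to_K, hsNorm_eq]
  simp [norm_pow]

lemma hsNorm_nonneg (T : (∀ j, Fin (n j)) → 𝕜) : 0 ≤ hsNorm T := Real.sqrt_nonneg _

lemma vnorm_nonneg {k : ℕ} (x : Fin k → 𝕜) : 0 ≤ vnorm x := Real.sqrt_nonneg _

lemma tinner_smul_left (c : 𝕜) (T Y : (∀ j, Fin (n j)) → 𝕜) :
    tinner (c • T) Y = c * tinner T Y := by
  simp [tinner, Finset.mul_sum, mul_assoc]

lemma tinner_conj (T Y : (∀ j, Fin (n j)) → 𝕜) :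
    tinner T Y = (starRingEnd 𝕜) (tinner Y T) := by
  simp [tinner, map_sum, mul_comm]

lemma hsNorm_smul (c : 𝕜) (T : (∀ j, Fin (n j)) → 𝕜) :
    hsNorm (c • T) = ‖c‖ * hsNorm T := by
  rw [hsNorm_eq, hsNorm_eq, ← norm_smul]
  congr 1

lemma sqrt_prod {ι : Type*} [Fintype ι] (s : ι → ℝ) (h : ∀ i, 0 ≤ s i) :
    Real.sqrt (∏ i, s i) = ∏ i, Real.sqrt (s i) := by
  have h2 : (∏ i, Real.sqrt (s i)) ^ 2 = ∏ i, s i := by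
    rw [← Finset.prod_pow]
    exact Finset.prod_congr rfl fun i _ => Real.sq_sqrt (h i)
  rw [← h2, Real.sqrt_sq (Finset.prod_nonneg fun i _ => Real.sqrt_nonneg _)]

lemma hsNorm_rankOne (x : ∀ j, Fin (n j) → 𝕜) :
    hsNorm (rankOne x) = ∏ j, vnorm (x j) := by
  unfold hsNorm rankOne vnorm
  rw [← sqrt_prod _ (fun j => Finset.sum_nonneg fun i _ => sq_nonneg _)]
  congr 1
  rw [Finset.prod_univ_sum]
  rw [Fintype.piFinset_univ]
  exact Finset.sum_congr rfl fun i _ => by rw [norm_prod, Finset.prod_pow]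
end basic

set_option linter.unusedSectionVars false

/-- The spectral norm of a tensor:
`max {|⟨T, x₁⊗⋯⊗x_d⟩| : ‖x_j‖ = 1 for all j}`. -/
def specNorm {𝕜 : Type*} [RCLike 𝕜] {d : ℕ} {n : Fin d → ℕ}
    (T : (∀ j, Fin (n j)) → 𝕜) : ℝ :=
  sSup {r : ℝ | ∃ x : ∀ j, Fin (n j) → 𝕜, (∀ j, vnorm (x j) = 1) ∧
    r = ‖tinner T (rankOne x)‖}

section spec
variable {𝕜 : Type*} [RCLike 𝕜] {d : ℕ} {n : Fin d → ℕ}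

def specSet (T : (∀ j, Fin (n j)) → 𝕜) : Set ℝ :=
  {r : ℝ | ∃ x : ∀ j, Fin (n j) → 𝕜, (∀ j, vnorm (x j) = 1) ∧
    r = ‖tinner T (rankOne x)‖}

lemma specNorm_def (T : (∀ j, Fin (n j)) → 𝕜) : specNorm T = sSup (specSet T) := rfl

/-- the Euclidean-space viewpoint for `vnorm` -/
lemma vnorm_eq {k : ℕ} (x : Fin k → 𝕜) :
    vnorm x = ‖((WithLp.equiv 2 (Fin k → 𝕜)).symm x : EuclideanSpace 𝕜 (Fin k))‖ := by
  rw [EuclideanSpace.norm_eq]; rfl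

lemma vnorm_smul {k : ℕ} (c : 𝕜) (x : Fin k → 𝕜) : vnorm (c • x) = ‖c‖ * vnorm x := by
  rw [vnorm_eq, vnorm_eq, ← norm_smul]; congr 1

lemma vnorm_eq_zero {k : ℕ} {x : Fin k → 𝕜} (h : vnorm x = 0) : x = 0 := by
  rw [vnorm_eq, norm_eq_zero] at h
  funext i
  exact congrFun (congrArg (WithLp.equiv 2 (Fin k → 𝕜)) h) i

lemma exists_unit (hn : ∀ j, 1 ≤ n j) :
    ∃ x : ∀ j, Fin (n j) → 𝕜, ∀ j, vnorm (x j) = 1 := by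
  refine ⟨fun j => Pi.single ⟨0, hn j⟩ 1, fun j => ?_⟩
  have h1 : (∑ i : Fin (n j), ‖(Pi.single (⟨0, hn j⟩ : Fin (n j)) (1:𝕜) : Fin (n j) → 𝕜) i‖ ^ 2) = 1 := by
    rw [Finset.sum_eq_single (⟨0, hn j⟩ : Fin (n j))]
    · simp
    · intro b _ hb; simp [Pi.single_apply, hb]
    · simp
  unfold vnorm
  rw [h1, Real.sqrt_one]

lemma specSet_bdd (T : (∀ j, Fin (n j)) → 𝕜) : ∀ r ∈ specSet T, r ≤ hsNorm T := by
  rintro r ⟨x, hx, rfl⟩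
  calc ‖tinner T (rankOne x)‖ ≤ hsNorm T * hsNorm (rankOne x) := tinner_norm_le _ _
    _ = hsNorm T := by rw [hsNorm_rankOne, Finset.prod_congr rfl fun j _ => hx j]; simp

lemma specSet_nonempty (hn : ∀ j, 1 ≤ n j) (T : (∀ j, Fin (n j)) → 𝕜) :
    (specSet T).Nonempty := by
  obtain ⟨x, hx⟩ := exists_unit (𝕜 := 𝕜) hn
  exact ⟨_, x, hx, rfl⟩

lemma le_specNorm (T : (∀ j, Fin (n j)) → 𝕜) {x : ∀ j, Fin (n j) → 𝕜}
    (hx : ∀ j, vnorm (x j) = 1) : ‖tinner T (rankOne x)‖ ≤ specNorm T :=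
  le_csSup ⟨hsNorm T, specSet_bdd T⟩ ⟨x, hx, rfl⟩

lemma specNorm_nonneg (hn : ∀ j, 1 ≤ n j) (T : (∀ j, Fin (n j)) → 𝕜) :
    0 ≤ specNorm T := by
  obtain ⟨x, hx⟩ := exists_unit (𝕜 := 𝕜) hn
  exact le_trans (norm_nonneg _) (le_specNorm T hx)

lemma specNorm_le_hsNorm (hn : ∀ j, 1 ≤ n j) (T : (∀ j, Fin (n j)) → 𝕜) :
    specNorm T ≤ hsNorm T :=
  csSup_le (specSet_nonempty hn T) (specSet_bdd T)

lemma specNorm_smul_le (hn : ∀ j, 1 ≤ n j) (c : 𝕜) (T : (∀ j, Fin (n j)) → 𝕜) :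
    specNorm (c • T) ≤ ‖c‖ * specNorm T := by
  apply csSup_le (specSet_nonempty hn _)
  rintro r ⟨x, hx, rfl⟩
  rw [tinner_smul_left, norm_mul]
  exact mul_le_mul_of_nonneg_left (le_specNorm T hx) (norm_nonneg c)

lemma specNorm_smul (hn : ∀ j, 1 ≤ n j) (c : 𝕜) (T : (∀ j, Fin (n j)) → 𝕜) :
    specNorm (c • T) = ‖c‖ * specNorm T := by
  rcases eq_or_ne c 0 with rfl | hc
  · simp only [norm_zero, zero_mul]
    refine le_antisymm (by simpa using specNorm_smul_le hn 0 T) (specNorm_nonneg hn _)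
  · refine le_antisymm (specNorm_smul_le hn c T) ?_
    have h2 := specNorm_smul_le hn c⁻¹ (c • T)
    rw [inv_smul_smul₀ hc] at h2
    calc ‖c‖ * specNorm T ≤ ‖c‖ * (‖c⁻¹‖ * specNorm (c • T)) := by
          exact mul_le_mul_of_nonneg_left h2 (norm_nonneg c)
      _ = specNorm (c • T) := by
          rw [norm_inv, ← mul_assoc, mul_inv_cancel₀ (norm_ne_zero_iff.mpr hc), one_mul]

lemma real_smul_tensor (r : ℝ) (T : (∀ j, Fin (n j)) → 𝕜) :
    r • T = ((r : 𝕜)) • T := by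
  funext i; exact RCLike.real_smul_eq_coe_mul r (T i)

lemma specNorm_real_smul (hn : ∀ j, 1 ≤ n j) (r : ℝ) (T : (∀ j, Fin (n j)) → 𝕜) :
    specNorm (r • T) = |r| * specNorm T := by
  rw [real_smul_tensor, specNorm_smul hn]
  simp

lemma tinner_rankOne_le (hn : ∀ j, 1 ≤ n j) (T : (∀ j, Fin (n j)) → 𝕜)
    (x : ∀ j, Fin (n j) → 𝕜) :
    ‖tinner T (rankOne x)‖ ≤ specNorm T * ∏ j, vnorm (x j) := by
  by_cases h : ∃ j, vnorm (x j) = 0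
  · obtain ⟨j, hj⟩ := h
    have hx : x j = 0 := vnorm_eq_zero hj
    have : rankOne x = 0 := by
      funext i
      exact Finset.prod_eq_zero (Finset.mem_univ j) (by rw [hx]; rfl)
    rw [this]
    simp only [tinner, Pi.zero_apply, map_zero, mul_zero, Finset.sum_const_zero, norm_zero]
    exact mul_nonneg (specNorm_nonneg hn T)
      (Finset.prod_nonneg fun j _ => vnorm_nonneg _)
  · push_neg at h
    have hpos : ∀ j, 0 < vnorm (x j) := fun j => (vnorm_nonneg (x j)).lt_of_ne' (h j)
    set y : ∀ j, Fin (n j) → 𝕜 := fun j => ((vnorm (x j) : 𝕜))⁻¹ • x j with hy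
    have hyu : ∀ j, vnorm (y j) = 1 := by
      intro j
      rw [hy]
      rw [vnorm_smul]
      rw [norm_inv, RCLike.norm_ofReal, abs_of_pos (hpos j), inv_mul_cancel₀ (h j)]
    have hr : rankOne y = ((∏ j, (vnorm (x j) : 𝕜))⁻¹) • rankOne x := by
      funext i
      simp only [rankOne, hy, Pi.smul_apply, smul_eq_mul]
      rw [← Finset.prod_inv_distrib, ← Finset.prod_mul_distrib]
    have := le_specNorm T hyu
    rw [hr] at this
    have hconj : tinner T (((∏ j, (vnorm (x j) : 𝕜))⁻¹) • rankOne x)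
        = (starRingEnd 𝕜) ((∏ j, (vnorm (x j) : 𝕜))⁻¹) * tinner T (rankOne x) := by
      simp only [tinner, Pi.smul_apply, smul_eq_mul, map_mul, Finset.mul_sum]
      exact Finset.sum_congr rfl fun i _ => by ring
    rw [hconj, norm_mul] at this
    have hnorm : ‖(starRingEnd 𝕜) ((∏ j, (vnorm (x j) : 𝕜))⁻¹)‖
        = (∏ j, vnorm (x j))⁻¹ := by
      rw [RCLike.norm_conj, norm_inv]
      congr 1
      rw [← RCLike.ofReal_prod, RCLike.norm_ofReal]
      exact abs_of_pos (Finset.prod_pos fun j _ => hpos j)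
    rw [hnorm] at this
    have hp : 0 < ∏ j, vnorm (x j) := Finset.prod_pos fun j _ => hpos j
    calc ‖tinner T (rankOne x)‖
        = ((∏ j, vnorm (x j))⁻¹ * ‖tinner T (rankOne x)‖) * ∏ j, vnorm (x j) := by
          field_simp
      _ ≤ specNorm T * ∏ j, vnorm (x j) := mul_le_mul_of_nonneg_right this hp.le

end spec

/-- The nuclear norm of a tensor:
`min {∑ᵢ ∏ⱼ ‖x_{i,j}‖ : T = ∑ᵢ x_{i,1}⊗⋯⊗x_{i,d}}`. -/
def nucNorm {𝕜 : Type*} [RCLike 𝕜] {d : ℕ} {n : Fin d → ℕ}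
    (T : (∀ j, Fin (n j)) → 𝕜) : ℝ :=
  sInf {r : ℝ | ∃ (m : ℕ) (x : Fin m → ∀ j, Fin (n j) → 𝕜),
    T = (∑ i, rankOne (x i)) ∧ r = ∑ i, ∏ j, vnorm (x i j)}

section nuc
variable {𝕜 : Type*} [RCLike 𝕜] {d : ℕ} {n : Fin d → ℕ}

def nucSet (T : (∀ j, Fin (n j)) → 𝕜) : Set ℝ :=
  {r : ℝ | ∃ (m : ℕ) (x : Fin m → ∀ j, Fin (n j) → 𝕜),
    T = (∑ i, rankOne (x i)) ∧ r = ∑ i, ∏ j, vnorm (x i j)}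

lemma nucNorm_def (T : (∀ j, Fin (n j)) → 𝕜) : nucNorm T = sInf (nucSet T) := rfl

lemma vnorm_ite {k : ℕ} (a : Fin k) (c : 𝕜) :
    vnorm (fun l => if l = a then c else 0) = ‖c‖ := by
  unfold vnorm
  rw [Finset.sum_eq_single a]
  · simp
  · intro b _ hb; simp [hb]
  · simp

lemma explicit_deco (hd : 0 < d) (T : (∀ j, Fin (n j)) → 𝕜) :
    ∃ (m : ℕ) (x : Fin m → ∀ j, Fin (n j) → 𝕜),
      T = (∑ i, rankOne (x i)) ∧ (∑ i, ∏ j, vnorm (x i j)) = ∑ i, ‖T i‖ := by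
  classical
  have j₀ : Fin d := ⟨0, hd⟩
  set e : Fin (Fintype.card (∀ j, Fin (n j))) → (∀ j, Fin (n j)) :=
    fun k => (Fintype.equivFin _).symm k with he
  refine ⟨Fintype.card (∀ j, Fin (n j)),
    fun k j l => (if j = (⟨0, hd⟩ : Fin d) then T (e k) else 1) *
      (if l = e k j then 1 else 0), ?_, ?_⟩
  · funext i
    rw [Finset.sum_apply]
    have hro : ∀ k, rankOne (fun j l => (if j = (⟨0, hd⟩ : Fin d) then T (e k) else 1) *
        (if l = e k j then 1 else 0) : ∀ j, Fin (n j) → 𝕜) i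
        = if e k = i then T (e k) else 0 := by
      intro k
      show (∏ j, (if j = (⟨0, hd⟩ : Fin d) then T (e k) else 1) *
        (if i j = e k j then 1 else 0)) = _
      by_cases hik : e k = i
      · rw [if_pos hik]
        subst hik
        have : ∀ j, (if j = (⟨0, hd⟩ : Fin d) then T (e k) else 1) *
            (if e k j = e k j then (1:𝕜) else 0)
            = if j = (⟨0, hd⟩ : Fin d) then T (e k) else 1 := by
          intro j; rw [if_pos rfl, mul_one]
        rw [Finset.prod_congr rfl fun j _ => this j]
        simp [Finset.prod_ite_eq']
      · rw [if_neg hik]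
        obtain ⟨j, hj⟩ : ∃ j, i j ≠ e k j := by
          by_contra hc
          push_neg at hc
          exact hik (funext fun j => (hc j).symm)
        exact Finset.prod_eq_zero (Finset.mem_univ j) (by rw [if_neg hj, mul_zero])
    rw [Finset.sum_congr rfl fun k _ => hro k]
    rw [Fintype.sum_equiv (Fintype.equivFin (∀ j, Fin (n j))).symm _
      (fun i' => if i' = i then T i' else 0) (fun k => by simp [he])]
    simp
  · have hvn : ∀ k j, vnorm (fun l => (if j = (⟨0, hd⟩ : Fin d) then T (e k) else 1) *
        (if l = e k j then (1:𝕜) else 0)) = if j = (⟨0, hd⟩ : Fin d) then ‖T (e k)‖ else 1 := by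
      intro k j
      rw [show (fun l => (if j = (⟨0, hd⟩ : Fin d) then T (e k) else 1) *
          (if l = e k j then (1:𝕜) else 0))
        = (fun l => if l = e k j then (if j = (⟨0, hd⟩ : Fin d) then T (e k) else 1) else 0) by
          funext l; split <;> simp]
      rw [vnorm_ite]
      split <;> simp
    have hcost : ∀ k, (∏ j, (if j = (⟨0, hd⟩ : Fin d) then ‖T (e k)‖ else 1)) = ‖T (e k)‖ := by
      intro k; simp [Finset.prod_ite_eq']
    rw [Finset.sum_congr rfl fun k _ => by rw [Finset.prod_congr rfl fun j _ => hvn k j,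
      hcost k]]
    exact Fintype.sum_equiv (Fintype.equivFin (∀ j, Fin (n j))).symm _ _ (fun k => rfl)

lemma nucSet_nonneg (T : (∀ j, Fin (n j)) → 𝕜) : ∀ r ∈ nucSet T, 0 ≤ r := by
  rintro r ⟨m, x, -, rfl⟩
  exact Finset.sum_nonneg fun i _ => Finset.prod_nonneg fun j _ => vnorm_nonneg _

lemma nucSet_bddBelow (T : (∀ j, Fin (n j)) → 𝕜) : BddBelow (nucSet T) :=
  ⟨0, fun r hr => nucSet_nonneg T r hr⟩

lemma nucSet_nonempty (hd : 0 < d) (T : (∀ j, Fin (n j)) → 𝕜) : (nucSet T).Nonempty := by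
  obtain ⟨m, x, h1, h2⟩ := explicit_deco hd T
  exact ⟨_, m, x, h1, rfl⟩

lemma nucNorm_nonneg (hd : 0 < d) (T : (∀ j, Fin (n j)) → 𝕜) : 0 ≤ nucNorm T :=
  le_csInf (nucSet_nonempty hd T) (nucSet_nonneg T)

lemma nucNorm_le_sum_norm (hd : 0 < d) (T : (∀ j, Fin (n j)) → 𝕜) :
    nucNorm T ≤ ∑ i, ‖T i‖ := by
  obtain ⟨m, x, h1, h2⟩ := explicit_deco hd T
  exact csInf_le (nucSet_bddBelow T) ⟨m, x, h1, h2.symm⟩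

end nuc

section nuc2
variable {𝕜 : Type*} [RCLike 𝕜] {d : ℕ} {n : Fin d → ℕ}

lemma smul_deco (hd : 0 < d) (c : 𝕜) {m : ℕ} (x : Fin m → ∀ j, Fin (n j) → 𝕜) :
    ∃ y : Fin m → ∀ j, Fin (n j) → 𝕜,
      (∀ k, rankOne (y k) = c • rankOne (x k)) ∧
      (∀ k, (∏ j, vnorm (y k j)) = ‖c‖ * ∏ j, vnorm (x k j)) := by
  refine ⟨fun k j => if j = (⟨0, hd⟩ : Fin d) then c • x k j else x k j, ?_, ?_⟩
  · intro k; funext i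
    show (∏ j, (if j = (⟨0, hd⟩ : Fin d) then c • x k j else x k j) (i j))
      = c • ∏ j, x k j (i j)
    have h : ∀ j, (if j = (⟨0, hd⟩ : Fin d) then c • x k j else x k j) (i j)
        = (if j = (⟨0, hd⟩ : Fin d) then c else 1) * x k j (i j) := by
      intro j; split <;> simp
    rw [Finset.prod_congr rfl fun j _ => h j, Finset.prod_mul_distrib]
    simp [Finset.prod_ite_eq']
  · intro k
    have h : ∀ j, vnorm ((if j = (⟨0, hd⟩ : Fin d) then c • x k j else x k j))
        = (if j = (⟨0, hd⟩ : Fin d) then ‖c‖ else 1) * vnorm (x k j) := by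
      intro j; split <;> simp [vnorm_smul]
    rw [Finset.prod_congr rfl fun j _ => h j, Finset.prod_mul_distrib]
    simp [Finset.prod_ite_eq']

lemma nucNorm_combo (hd : 0 < d) {a b : ℝ} (ha : 0 ≤ a) (hb : 0 ≤ b)
    (Y Z : (∀ j, Fin (n j)) → 𝕜) :
    nucNorm (a • Y + b • Z) ≤ a * nucNorm Y + b * nucNorm Z := by
  refine le_of_forall_pos_le_add fun ε hε => ?_
  set ε' := ε / (a + b + 1) with hε'def
  have hab : (0:ℝ) < a + b + 1 := by linarith
  have hε' : 0 < ε' := div_pos hε hab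
  obtain ⟨rY, hrYmem, hrY⟩ := Real.lt_sInf_add_pos (nucSet_nonempty hd Y) hε'
  obtain ⟨rZ, hrZmem, hrZ⟩ := Real.lt_sInf_add_pos (nucSet_nonempty hd Z) hε'
  obtain ⟨mY, xY, hY1, hY2⟩ := hrYmem
  obtain ⟨mZ, xZ, hZ1, hZ2⟩ := hrZmem
  obtain ⟨yY, hyY1, hyY2⟩ := smul_deco hd ((a : 𝕜)) xY
  obtain ⟨yZ, hyZ1, hyZ2⟩ := smul_deco hd ((b : 𝕜)) xZ
  set w : Fin (mY + mZ) → ∀ j, Fin (n j) → 𝕜 :=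
    Fin.addCases (motive := fun _ => ∀ j, Fin (n j) → 𝕜) yY yZ with hw
  have hsum : a • Y + b • Z = ∑ k : Fin (mY + mZ), rankOne (w k) := by
    rw [Fin.sum_univ_add]
    have h1 : ∑ k : Fin mY, rankOne (w (Fin.castAdd mZ k))
        = (a : 𝕜) • ∑ k, rankOne (xY k) := by
      rw [Finset.smul_sum]
      exact Finset.sum_congr rfl fun k _ => by rw [hw, Fin.addCases_left, hyY1]
    have h2 : ∑ k : Fin mZ, rankOne (w (Fin.natAdd mY k))
        = (b : 𝕜) • ∑ k, rankOne (xZ k) := by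
      rw [Finset.smul_sum]
      exact Finset.sum_congr rfl fun k _ => by rw [hw, Fin.addCases_right, hyZ1]
    rw [h1, h2, ← hY1, ← hZ1, real_smul_tensor, real_smul_tensor]
  have hcost : (∑ k : Fin (mY + mZ), ∏ j, vnorm (w k j))
      = a * rY + b * rZ := by
    rw [Fin.sum_univ_add]
    have h1 : ∑ k : Fin mY, ∏ j, vnorm (w (Fin.castAdd mZ k) j)
        = a * rY := by
      rw [hY2, Finset.mul_sum]
      refine Finset.sum_congr rfl fun k _ => ?_
      rw [show w (Fin.castAdd mZ k) = yY k from Fin.addCases_left k, hyY2,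
        RCLike.norm_ofReal, abs_of_nonneg ha]
    have h2 : ∑ k : Fin mZ, ∏ j, vnorm (w (Fin.natAdd mY k) j)
        = b * rZ := by
      rw [hZ2, Finset.mul_sum]
      refine Finset.sum_congr rfl fun k _ => ?_
      rw [show w (Fin.natAdd mY k) = yZ k from Fin.addCases_right k, hyZ2,
        RCLike.norm_ofReal, abs_of_nonneg hb]
    rw [h1, h2]
  have hmem : a * rY + b * rZ ∈ nucSet (a • Y + b • Z) :=
    ⟨mY + mZ, w, hsum, hcost.symm⟩
  have hle := csInf_le (nucSet_bddBelow _) hmem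
  have : a * rY + b * rZ ≤ a * nucNorm Y + b * nucNorm Z + (a + b) * ε' := by
    have h1 : a * rY ≤ a * (nucNorm Y + ε') :=
      mul_le_mul_of_nonneg_left hrY.le ha
    have h2 : b * rZ ≤ b * (nucNorm Z + ε') :=
      mul_le_mul_of_nonneg_left hrZ.le hb
    nlinarith
  have hεfin : (a + b) * ε' ≤ ε := by
    rw [hε'def]
    rw [div_eq_inv_mul, ← mul_assoc]
    have : (a + b) * (a + b + 1)⁻¹ ≤ 1 := by
      rw [mul_inv_le_iff₀ hab]; linarith
    nlinarith
  calc nucNorm (a • Y + b • Z) ≤ a * rY + b * rZ := hle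
    _ ≤ a * nucNorm Y + b * nucNorm Z + (a + b) * ε' := this
    _ ≤ a * nucNorm Y + b * nucNorm Z + ε := by linarith

end nuc2

section nuc3
variable {𝕜 : Type*} [RCLike 𝕜] {d : ℕ} {n : Fin d → ℕ}

lemma nucNorm_zero : nucNorm (0 : (∀ j, Fin (n j)) → 𝕜) = 0 := by
  have hmem : (0:ℝ) ∈ nucSet (0 : (∀ j, Fin (n j)) → 𝕜) :=
    ⟨0, fun k => (k.elim0 : _), by simp, by simp⟩
  refine le_antisymm (csInf_le (nucSet_bddBelow _) hmem) (le_csInf ⟨0, hmem⟩ (nucSet_nonneg _))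

lemma nucNorm_real_smul_le (hd : 0 < d) {a : ℝ} (ha : 0 ≤ a)
    (Y : (∀ j, Fin (n j)) → 𝕜) : nucNorm (a • Y) ≤ a * nucNorm Y := by
  have := nucNorm_combo hd ha (le_refl (0:ℝ)) Y (0 : (∀ j, Fin (n j)) → 𝕜)
  rw [zero_smul, add_zero, nucNorm_zero, mul_zero, add_zero] at this
  exact this

lemma nucNorm_real_smul (hd : 0 < d) {a : ℝ} (ha : 0 < a)
    (Y : (∀ j, Fin (n j)) → 𝕜) : nucNorm (a • Y) = a * nucNorm Y := by
  refine le_antisymm (nucNorm_real_smul_le hd ha.le Y) ?_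
  have h2 := nucNorm_real_smul_le hd (le_of_lt (inv_pos.mpr ha)) (a • Y)
  rw [inv_smul_smul₀ ha.ne' ] at h2
  calc a * nucNorm Y ≤ a * (a⁻¹ * nucNorm (a • Y)) := by
        exact mul_le_mul_of_nonneg_left h2 ha.le
    _ = nucNorm (a • Y) := by field_simp

lemma nucNorm_le_add (hd : 0 < d) (A B : (∀ j, Fin (n j)) → 𝕜) :
    nucNorm A ≤ nucNorm B + nucNorm (A - B) := by
  have := nucNorm_combo hd (zero_le_one) (zero_le_one) B (A - B)
  rw [one_smul, one_smul, add_sub_cancel, one_mul, one_mul] at this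
  exact this

lemma tinner_sum_left {m : ℕ} (A : Fin m → (∀ j, Fin (n j)) → 𝕜)
    (Y : (∀ j, Fin (n j)) → 𝕜) :
    tinner (∑ k, A k) Y = ∑ k, tinner (A k) Y := by
  unfold tinner
  rw [Finset.sum_comm]
  exact Finset.sum_congr rfl fun i _ => by rw [Finset.sum_apply, Finset.sum_mul]

lemma tinner_le_nucNorm_mul_specNorm (hn : ∀ j, 1 ≤ n j) (hd : 0 < d)
    (T Y : (∀ j, Fin (n j)) → 𝕜) :
    ‖tinner T Y‖ ≤ nucNorm T * specNorm Y := by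
  have key : ∀ r ∈ nucSet T, ‖tinner T Y‖ ≤ specNorm Y * r := by
    rintro r ⟨m, x, rfl, rfl⟩
    rw [tinner_sum_left]
    calc ‖∑ k, tinner (rankOne (x k)) Y‖ ≤ ∑ k, ‖tinner (rankOne (x k)) Y‖ :=
        norm_sum_le _ _
      _ ≤ ∑ k, specNorm Y * ∏ j, vnorm (x k j) := by
        refine Finset.sum_le_sum fun k _ => ?_
        rw [tinner_conj, RCLike.norm_conj]
        exact tinner_rankOne_le hn Y (x k)
      _ = specNorm Y * ∑ k, ∏ j, vnorm (x k j) := by rw [Finset.mul_sum]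
  rcases eq_or_lt_of_le (specNorm_nonneg hn Y) with hs0 | hs
  · obtain ⟨r, hr⟩ := nucSet_nonempty hd T
    have := key r hr
    rw [← hs0, zero_mul] at this
    have h0 : ‖tinner T Y‖ = 0 := le_antisymm this (norm_nonneg _)
    rw [h0]
    exact mul_nonneg (nucNorm_nonneg hd T) (specNorm_nonneg hn Y)
  · have : ‖tinner T Y‖ / specNorm Y ≤ nucNorm T := by
      refine le_csInf (nucSet_nonempty hd T) fun r hr => ?_
      rw [div_le_iff₀ hs]
      calc ‖tinner T Y‖ ≤ specNorm Y * r := key r hr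
        _ = r * specNorm Y := mul_comm _ _
    calc ‖tinner T Y‖ = (‖tinner T Y‖ / specNorm Y) * specNorm Y := by field_simp
      _ ≤ nucNorm T * specNorm Y := mul_le_mul_of_nonneg_right this hs.le

lemma hsNorm_le_nucNorm (hn : ∀ j, 1 ≤ n j) (hd : 0 < d)
    (T : (∀ j, Fin (n j)) → 𝕜) : hsNorm T ≤ nucNorm T := by
  rcases eq_or_lt_of_le (hsNorm_nonneg T) with h0 | hpos
  · rw [← h0]; exact nucNorm_nonneg hd T
  · have h1 : hsNorm T ^ 2 ≤ nucNorm T * specNorm T := by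
      rw [← tinner_self]
      exact tinner_le_nucNorm_mul_specNorm hn hd T T
    have h2 : nucNorm T * specNorm T ≤ nucNorm T * hsNorm T :=
      mul_le_mul_of_nonneg_left (specNorm_le_hsNorm hn T) (nucNorm_nonneg hd T)
    have := h1.trans h2
    rw [pow_two] at this
    exact le_of_mul_le_mul_right (by linarith [this]) hpos

lemma nucNorm_rankOne_le (x : ∀ j, Fin (n j) → 𝕜) :
    nucNorm (rankOne x) ≤ ∏ j, vnorm (x j) := by
  refine csInf_le (nucSet_bddBelow _) ⟨1, fun _ => x, by simp, by simp⟩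

end nuc3

section dualcert
variable {𝕜 : Type*} [RCLike 𝕜] {d : ℕ} {n : Fin d → ℕ}

lemma re_mul_conj (a b : ℝ) (y : 𝕜) :
    RCLike.re (y * (starRingEnd 𝕜) ((a:𝕜) + (b:𝕜) * RCLike.I))
      = RCLike.re y * a + RCLike.im y * b := by
  have hc : (starRingEnd 𝕜) ((a:𝕜) + (b:𝕜) * RCLike.I) = (a:𝕜) - (b:𝕜) * RCLike.I := by
    rw [map_add, map_mul, RCLike.conj_ofReal, RCLike.conj_ofReal, RCLike.conj_I]
    ring
  have h2 : y * ((a:𝕜) - (b:𝕜) * RCLike.I) = (a:𝕜) * y + (b:𝕜) * -(RCLike.I * y) := by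
    ring
  rw [hc, h2, map_add, RCLike.re_ofReal_mul, RCLike.re_ofReal_mul, map_neg,
    RCLike.I_mul_re]
  ring

lemma rep_functional (f : ((∀ j, Fin (n j)) → 𝕜) →L[ℝ] ℝ) :
    ∃ Z : (∀ j, Fin (n j)) → 𝕜, ∀ Y, f Y = RCLike.re (tinner Y Z) := by
  classical
  refine ⟨fun i => ((f ((Pi.single i (1:𝕜) : (∀ j, Fin (n j)) → 𝕜)) : ℝ) : 𝕜)
    + ((f ((Pi.single i (RCLike.I : 𝕜) : (∀ j, Fin (n j)) → 𝕜)) : ℝ) : 𝕜)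
    * RCLike.I, fun Y => ?_⟩
  have hY : Y = ∑ i, Pi.single i (Y i) := (Finset.univ_sum_single Y).symm
  conv_lhs => rw [hY]
  rw [map_sum]
  unfold tinner
  rw [map_sum]
  refine Finset.sum_congr rfl fun i _ => ?_
  have hsingle : (Pi.single i (Y i) : (∀ j, Fin (n j)) → 𝕜)
      = RCLike.re (Y i) • (Pi.single i (1:𝕜) : (∀ j, Fin (n j)) → 𝕜)
      + RCLike.im (Y i) • (Pi.single i (RCLike.I : 𝕜) : (∀ j, Fin (n j)) → 𝕜) := by
    rw [← Pi.single_smul, ← Pi.single_smul, ← Pi.single_add]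
    refine congrArg _ ?_
    rw [RCLike.real_smul_eq_coe_mul, RCLike.real_smul_eq_coe_mul, mul_one]
    exact (RCLike.re_add_im (Y i)).symm
  rw [hsingle, map_add, map_smul, map_smul, smul_eq_mul, smul_eq_mul]
  exact (re_mul_conj (f ((Pi.single i (1:𝕜) : (∀ j, Fin (n j)) → 𝕜)))
    (f ((Pi.single i (RCLike.I : 𝕜) : (∀ j, Fin (n j)) → 𝕜))) (Y i)).symm

lemma hsNorm_eq_zero {T : (∀ j, Fin (n j)) → 𝕜} (h : hsNorm T = 0) : T = 0 := by
  rw [hsNorm_eq, norm_eq_zero] at h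
  funext i
  exact congrFun (congrArg (WithLp.equiv 2 _) h) i

lemma hsNorm_real_smul (a : ℝ) (T : (∀ j, Fin (n j)) → 𝕜) :
    hsNorm (a • T) = |a| * hsNorm T := by
  rw [real_smul_tensor, hsNorm_smul, RCLike.norm_ofReal]

lemma tinner_real_smul_right (a : ℝ) (T Y : (∀ j, Fin (n j)) → 𝕜) :
    tinner T (a • Y) = (a : 𝕜) * tinner T Y := by
  unfold tinner
  rw [Finset.mul_sum]
  refine Finset.sum_congr rfl fun i _ => ?_
  rw [Pi.smul_apply, RCLike.real_smul_eq_coe_mul, map_mul, RCLike.conj_ofReal]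
  ring

lemma nucNorm_continuous (hd : 0 < d) :
    Continuous (nucNorm : ((∀ j, Fin (n j)) → 𝕜) → ℝ) := by
  rw [Metric.continuous_iff]
  intro A ε hε
  set N := (Fintype.card (∀ j, Fin (n j)) : ℝ)
  have hN : 0 ≤ N := Nat.cast_nonneg _
  refine ⟨ε / (N + 1), div_pos hε (by linarith), fun B hB => ?_⟩
  have hbound : ∀ (X W : (∀ j, Fin (n j)) → 𝕜),
      nucNorm X - nucNorm W ≤ ∑ i, ‖X i - W i‖ := by
    intro X W
    have h1 := nucNorm_le_add hd X W
    have h2 : nucNorm (X - W) ≤ ∑ i, ‖X i - W i‖ := by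
      have := nucNorm_le_sum_norm hd (X - W)
      simpa using this
    linarith
  have hsum : ∀ (X W : (∀ j, Fin (n j)) → 𝕜), (∑ i, ‖X i - W i‖) ≤ N * dist X W := by
    intro X W
    calc (∑ i, ‖X i - W i‖) = ∑ i, dist (X i) (W i) := by
          refine Finset.sum_congr rfl fun i _ => (dist_eq_norm _ _).symm
      _ ≤ ∑ _i : (∀ j, Fin (n j)), dist X W :=
          Finset.sum_le_sum fun i _ => dist_le_pi_dist X W i
      _ = N * dist X W := by rw [Finset.sum_const, nsmul_eq_mul, Finset.card_univ]
  rw [Real.dist_eq, abs_lt]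
  have d1 := (hbound B A).trans (hsum B A)
  have d2 := (hbound A B).trans ((hsum A B).trans_eq (by rw [dist_comm]))
  have hdist : N * dist B A < ε := by
    have h3 : N * dist B A ≤ N * (ε / (N + 1)) :=
      mul_le_mul_of_nonneg_left hB.le hN
    have h4 : N * (ε / (N + 1)) < ε := by
      rw [div_eq_inv_mul, ← mul_assoc]
      have : N * (N + 1)⁻¹ < 1 := by
        rw [mul_inv_lt_iff₀ (by linarith)]; linarith
      nlinarith
    linarith
  constructor <;> linarith

lemma nucBall_closed (hd : 0 < d) :
    IsClosed {Y : (∀ j, Fin (n j)) → 𝕜 | nucNorm Y ≤ 1} :=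
  IsClosed.preimage (nucNorm_continuous hd) isClosed_Iic

lemma nucBall_convex (hd : 0 < d) :
    Convex ℝ {Y : (∀ j, Fin (n j)) → 𝕜 | nucNorm Y ≤ 1} := by
  intro Y hY Z hZ a b ha hb hab
  calc nucNorm (a • Y + b • Z) ≤ a * nucNorm Y + b * nucNorm Z :=
      nucNorm_combo hd ha hb Y Z
    _ ≤ a * 1 + b * 1 := add_le_add (mul_le_mul_of_nonneg_left hY ha)
        (mul_le_mul_of_nonneg_left hZ hb)
    _ = 1 := by rw [mul_one, mul_one, hab]

lemma nucNorm_dual_cert (hn : ∀ j, 1 ≤ n j) (hd : 0 < d)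
    {T : (∀ j, Fin (n j)) → 𝕜} {r : ℝ} (hr : 0 < r) (hT : r < nucNorm T) :
    ∃ W, specNorm W ≤ 1 ∧ r < ‖tinner T W‖ := by
  set K := {Y : (∀ j, Fin (n j)) → 𝕜 | nucNorm Y ≤ 1} with hK
  have hnotin : r⁻¹ • T ∉ K := by
    rw [hK, Set.mem_setOf_eq, nucNorm_real_smul hd (inv_pos.mpr hr), not_le,
      inv_mul_eq_div]
    exact (one_lt_div hr).mpr hT
  letI : LocallyConvexSpace ℝ ((∀ j, Fin (n j)) → 𝕜) := NormedSpace.toLocallyConvexSpace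
  letI : IsTopologicalAddGroup ((∀ j, Fin (n j)) → 𝕜) := inferInstance
  letI : ContinuousSMul ℝ ((∀ j, Fin (n j)) → 𝕜) := inferInstance
  obtain ⟨f, u, hfu, hfx⟩ :=
    @geometric_hahn_banach_closed_point ((∀ j, Fin (n j)) → 𝕜) _ _ _ K (r⁻¹ • T)
      ‹_› ‹_› ‹_› (nucBall_convex hd) (nucBall_closed hd) hnotin
  obtain ⟨Z, hZ⟩ := rep_functional f
  have h0K : (0 : (∀ j, Fin (n j)) → 𝕜) ∈ K := by
    rw [hK, Set.mem_setOf_eq, nucNorm_zero]; exact zero_le_one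
  have hu0 : 0 < u := by
    have := hfu 0 h0K
    rwa [map_zero] at this
  have hspecZ : specNorm Z ≤ u := by
    refine csSup_le (specSet_nonempty hn Z) ?_
    rintro s ⟨x, hx, rfl⟩
    set t := tinner Z (rankOne x) with htdef
    rcases eq_or_ne t 0 with ht | ht
    · rw [ht, norm_zero]; exact hu0.le
    · set c : 𝕜 := t / (‖t‖ : 𝕜) with hc
      have hcnorm : ‖c‖ = 1 := by
        rw [hc, norm_div, RCLike.norm_ofReal, abs_of_pos (norm_pos_iff.mpr ht),
          div_self (norm_ne_zero_iff.mpr ht)]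
      obtain ⟨y, hy1, hy2⟩ := smul_deco hd c (fun _ : Fin 1 => x)
      have hmem : c • rankOne x ∈ K := by
        rw [hK, Set.mem_setOf_eq, ← hy1 0]
        calc nucNorm (rankOne (y 0)) ≤ ∏ j, vnorm (y 0 j) := nucNorm_rankOne_le _
          _ = ‖c‖ * ∏ j, vnorm (x j) := hy2 0
          _ = 1 := by
            rw [hcnorm, one_mul, Finset.prod_congr rfl fun j _ => hx j,
              Finset.prod_const_one]
      have hflt := hfu _ hmem
      rw [hZ] at hflt
      have heq : tinner (c • rankOne x) Z = ((‖t‖ : ℝ) : 𝕜) := by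
        rw [tinner_smul_left]
        have h1 : tinner (rankOne x) Z = (starRingEnd 𝕜) t := by
          rw [tinner_conj, ← htdef]
        rw [h1, hc, div_mul_eq_mul_div, RCLike.mul_conj]
        rw [show ((‖t‖:ℝ):𝕜) ^ 2 = ((‖t‖:ℝ):𝕜) * ((‖t‖:ℝ):𝕜) from sq _]
        rw [mul_div_assoc, div_self (by
          simpa [RCLike.ofReal_eq_zero] using norm_ne_zero_iff.mpr ht), mul_one]
      rw [heq, RCLike.ofReal_re] at hflt
      exact hflt.le
  have hfT : u < RCLike.re (tinner (r⁻¹ • T) Z) := by rw [← hZ]; exact hfx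
  have hu0' := inv_pos.mpr hu0
  refine ⟨u⁻¹ • Z, ?_, ?_⟩
  · rw [specNorm_real_smul hn, abs_of_pos hu0']
    calc u⁻¹ * specNorm Z ≤ u⁻¹ * u := mul_le_mul_of_nonneg_left hspecZ hu0'.le
      _ = 1 := inv_mul_cancel₀ hu0.ne'
  · have hsm : tinner (r⁻¹ • T) Z = ((r⁻¹ : ℝ) : 𝕜) * tinner T Z := by
      rw [real_smul_tensor, tinner_smul_left]
    rw [hsm, RCLike.re_ofReal_mul] at hfT
    have h1 : r * u < RCLike.re (tinner T Z) := by
      have := mul_lt_mul_of_pos_left hfT hr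
      rw [← mul_assoc, mul_inv_cancel₀ hr.ne', one_mul] at this
      exact this
    have h2 : RCLike.re (tinner T (u⁻¹ • Z)) = u⁻¹ * RCLike.re (tinner T Z) := by
      rw [tinner_real_smul_right, RCLike.re_ofReal_mul]
    calc r = u⁻¹ * (r * u) := by field_simp
      _ < u⁻¹ * RCLike.re (tinner T Z) := mul_lt_mul_of_pos_left h1 hu0'
      _ = RCLike.re (tinner T (u⁻¹ • Z)) := h2.symm
      _ ≤ ‖tinner T (u⁻¹ • Z)‖ := RCLike.re_le_norm _

end dualcert

/-- `α(n, 𝕜)`: the maximal nuclear norm of a tensor of Hilbert–Schmidt norm one. -/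
def alphaN (𝕜 : Type*) [RCLike 𝕜] (d : ℕ) (n : Fin d → ℕ) : ℝ :=
  sSup {r : ℝ | ∃ T : (∀ j, Fin (n j)) → 𝕜, hsNorm T = 1 ∧ r = nucNorm T}

/-- `β(n, 𝕜)`: the minimal spectral norm of a tensor of Hilbert–Schmidt norm one. -/
def betaN (𝕜 : Type*) [RCLike 𝕜] (d : ℕ) (n : Fin d → ℕ) : ℝ :=
  sInf {r : ℝ | ∃ T : (∀ j, Fin (n j)) → 𝕜, hsNorm T = 1 ∧ r = specNorm T}

/-- For `d ≥ 3`, `α(n,𝕜)·β(n,𝕜) = 1`. -/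
theorem stmt2 (𝕜 : Type*) [RCLike 𝕜] (d : ℕ) (hd : 3 ≤ d) (n : Fin d → ℕ)
    (hn : ∀ j, 1 ≤ n j) :
    alphaN 𝕜 d n * betaN 𝕜 d n = 1 := by
  have hd0 : 0 < d := by omega
  obtain ⟨x₀, hx₀⟩ := exists_unit (𝕜 := 𝕜) (n := n) hn
  have hT₀ : hsNorm (rankOne x₀) = 1 := by
    rw [hsNorm_rankOne, Finset.prod_congr rfl fun j _ => hx₀ j, Finset.prod_const_one]
  set A := {r : ℝ | ∃ T : (∀ j, Fin (n j)) → 𝕜, hsNorm T = 1 ∧ r = nucNorm T} with hA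
  set B := {r : ℝ | ∃ T : (∀ j, Fin (n j)) → 𝕜, hsNorm T = 1 ∧ r = specNorm T} with hB
  have hαdef : alphaN 𝕜 d n = sSup A := rfl
  have hβdef : betaN 𝕜 d n = sInf B := rfl
  set α := alphaN 𝕜 d n with hα
  set β := betaN 𝕜 d n with hβ
  have hAne : A.Nonempty := ⟨_, rankOne x₀, hT₀, rfl⟩
  have hBne : B.Nonempty := ⟨_, rankOne x₀, hT₀, rfl⟩
  have hBbdd : BddBelow B := by
    refine ⟨0, ?_⟩
    rintro r ⟨T, hT, rfl⟩
    exact specNorm_nonneg hn T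
  have hβ_le : ∀ T : (∀ j, Fin (n j)) → 𝕜, hsNorm T = 1 → β ≤ specNorm T := by
    intro T hT
    exact csInf_le hBbdd ⟨T, hT, rfl⟩
  have key1 : ∀ W : (∀ j, Fin (n j)) → 𝕜, β * hsNorm W ≤ specNorm W := by
    intro W
    rcases eq_or_lt_of_le (hsNorm_nonneg W) with h0 | hpos
    · rw [← h0, mul_zero]; exact specNorm_nonneg hn W
    · have hc : hsNorm ((hsNorm W)⁻¹ • W) = 1 := by
        rw [hsNorm_real_smul, abs_of_pos (inv_pos.mpr hpos), inv_mul_cancel₀ hpos.ne']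
      have hle := hβ_le _ hc
      rw [specNorm_real_smul hn, abs_of_pos (inv_pos.mpr hpos)] at hle
      calc β * hsNorm W ≤ ((hsNorm W)⁻¹ * specNorm W) * hsNorm W :=
          mul_le_mul_of_nonneg_right hle hpos.le
        _ = specNorm W := by field_simp
  have spec_pos_aux : ∀ T : (∀ j, Fin (n j)) → 𝕜, hsNorm T = 1 →
      1 ≤ nucNorm T * specNorm T := by
    intro T hT
    have h := tinner_le_nucNorm_mul_specNorm hn hd0 T T
    rw [tinner_self, hT, one_pow] at h
    exact h
  haveI : Nonempty (∀ j, Fin (n j)) := ⟨fun j => ⟨0, hn j⟩⟩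
  have hAbdd : BddAbove A := by
    refine ⟨(Fintype.card (∀ j, Fin (n j)) : ℝ), ?_⟩
    rintro r ⟨T, hT, rfl⟩
    have hsum1 : (∑ i, ‖T i‖ ^ 2) = 1 := by
      have : Real.sqrt (∑ i, ‖T i‖ ^ 2) = 1 := hT
      nlinarith [Real.sq_sqrt (Finset.sum_nonneg fun i (_ : i ∈ Finset.univ)
        => sq_nonneg ‖T i‖), this]
    have hbound : ∀ i : (∀ j, Fin (n j)), ‖T i‖ ≤ 1 := by
      intro i
      have h1 : ‖T i‖ ^ 2 ≤ 1 := by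
        rw [← hsum1]
        exact Finset.single_le_sum (fun i _ => sq_nonneg ‖T i‖) (Finset.mem_univ i)
      nlinarith [norm_nonneg (T i)]
    calc nucNorm T ≤ ∑ i, ‖T i‖ := nucNorm_le_sum_norm hd0 T
      _ ≤ ∑ _i : (∀ j, Fin (n j)), 1 := Finset.sum_le_sum fun i _ => hbound i
      _ = (Fintype.card (∀ j, Fin (n j)) : ℝ) := by
          rw [Finset.sum_const, nsmul_eq_mul, mul_one, Finset.card_univ]
  have hα_ge : ∀ T : (∀ j, Fin (n j)) → 𝕜, hsNorm T = 1 → nucNorm T ≤ α := by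
    intro T hT
    exact le_csSup hAbdd ⟨T, hT, rfl⟩
  have hα_pos : 0 < α := by
    have h1 : (1:ℝ) ≤ nucNorm (rankOne x₀) := by
      rw [← hT₀]
      exact hsNorm_le_nucNorm hn hd0 _
    linarith [hα_ge _ hT₀]
  have hβ_ge : α⁻¹ ≤ β := by
    refine le_csInf hBne ?_
    rintro r ⟨T, hT, rfl⟩
    have h1 := spec_pos_aux T hT
    have h2 : nucNorm T * specNorm T ≤ α * specNorm T := by
      have hsn : 0 ≤ specNorm T := specNorm_nonneg hn T
      exact mul_le_mul_of_nonneg_right (hα_ge T hT) hsn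
    have h3 : 1 ≤ α * specNorm T := h1.trans h2
    nlinarith [mul_inv_cancel₀ hα_pos.ne', hα_pos]
  have hβpos : 0 < β := lt_of_lt_of_le (inv_pos.mpr hα_pos) hβ_ge
  have key2 : ∀ T : (∀ j, Fin (n j)) → 𝕜, hsNorm T = 1 → nucNorm T ≤ β⁻¹ := by
    intro T hT
    by_contra hcon
    push_neg at hcon
    obtain ⟨W, hW1, hW2⟩ := nucNorm_dual_cert hn hd0 (inv_pos.mpr hβpos) hcon
    have hWhs : hsNorm W ≤ β⁻¹ * specNorm W := by
      rw [← div_eq_inv_mul, le_div_iff₀ hβpos, mul_comm]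
      exact key1 W
    have hbig : ‖tinner T W‖ ≤ β⁻¹ := by
      calc ‖tinner T W‖ ≤ hsNorm T * hsNorm W := tinner_norm_le _ _
        _ = hsNorm W := by rw [hT, one_mul]
        _ ≤ β⁻¹ * specNorm W := hWhs
        _ ≤ β⁻¹ * 1 := mul_le_mul_of_nonneg_left hW1 (inv_pos.mpr hβpos).le
        _ = β⁻¹ := mul_one _
    exact absurd (hW2.trans_le hbig) (lt_irrefl _)
  have hα_le : α ≤ β⁻¹ := by
    refine csSup_le hAne ?_
    rintro r ⟨T, hT, rfl⟩
    exact key2 T hT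
  have h1 : α * β ≤ 1 := by
    calc α * β ≤ β⁻¹ * β := mul_le_mul_of_nonneg_right hα_le hβpos.le
      _ = 1 := inv_mul_cancel₀ hβpos.ne'
  have h2 : 1 ≤ α * β := by
    calc (1:ℝ) = α * α⁻¹ := (mul_inv_cancel₀ hα_pos.ne').symm
      _ ≤ α * β := mul_le_mul_of_nonneg_left hβ_ge hα_pos.le
  linarith
end
end

section
/- Let n ≥ 2 and F = ℝ or ℂ. Then α'(n,2,F) = √n and β'(n,2,F) = 1/√n. Moreover, if S is an n×n complex symmetric matrix (Sᵀ = S) with Frobenius norm ‖S‖ = 1, then ‖S‖₁ = √n if and only if √n·S is a unitary matrix. -/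
noncomputable section


/-- The Frobenius (Hilbert–Schmidt) norm of a matrix. -/
def frobNorm {𝕜 : Type*} [RCLike 𝕜] {m n : ℕ} (T : Matrix (Fin m) (Fin n) 𝕜) : ℝ :=
  Real.sqrt (∑ i, ∑ j, ‖T i j‖ ^ 2)

/-- The singular values of an `m × n` matrix: the square roots of the eigenvalues of
`T * Tᴴ`. -/
def singVals {𝕜 : Type*} [RCLike 𝕜] {m n : ℕ} (T : Matrix (Fin m) (Fin n) 𝕜) :
    Fin m → ℝ :=
  fun i => Real.sqrt ((Matrix.isHermitian_mul_conjTranspose_self T).eigenvalues i)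

/-- The nuclear norm of a matrix: the sum of its singular values. -/
def nuclearNormM {𝕜 : Type*} [RCLike 𝕜] {m n : ℕ} (T : Matrix (Fin m) (Fin n) 𝕜) : ℝ :=
  ∑ i, singVals T i

/-- The spectral norm of a matrix: its largest singular value. -/
def spectralNormM {𝕜 : Type*} [RCLike 𝕜] {m n : ℕ} (T : Matrix (Fin m) (Fin n) 𝕜) : ℝ :=
  ⨆ i, singVals T i

/-- `α'(n,2,𝕜)`: the maximal nuclear norm of a symmetric `n×n` matrix of Frobenius
norm one. -/
def alphaSymM (𝕜 : Type*) [RCLike 𝕜] (n : ℕ) : ℝ :=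
  sSup {r : ℝ | ∃ S : Matrix (Fin n) (Fin n) 𝕜, S.transpose = S ∧ frobNorm S = 1 ∧
    r = nuclearNormM S}

/-- `β'(n,2,𝕜)`: the minimal spectral norm of a symmetric `n×n` matrix of Frobenius
norm one. -/
def betaSymM (𝕜 : Type*) [RCLike 𝕜] (n : ℕ) : ℝ :=
  sInf {r : ℝ | ∃ S : Matrix (Fin n) (Fin n) 𝕜, S.transpose = S ∧ frobNorm S = 1 ∧
    r = spectralNormM S}

namespace Stmt6Aux
open Matrix

variable {𝕜 : Type*} [RCLike 𝕜] {n : ℕ}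

lemma singVals_nonneg (T : Matrix (Fin n) (Fin n) 𝕜) (i : Fin n) : 0 ≤ singVals T i :=
  Real.sqrt_nonneg _

lemma sq_singVals (T : Matrix (Fin n) (Fin n) 𝕜) (i : Fin n) :
    singVals T i ^ 2 = (Matrix.isHermitian_mul_conjTranspose_self T).eigenvalues i :=
  Real.sq_sqrt (Matrix.eigenvalues_self_mul_conjTranspose_nonneg T i)

lemma sum_sq_singVals (T : Matrix (Fin n) (Fin n) 𝕜) :
    ∑ i, singVals T i ^ 2 = ∑ i, ∑ j, ‖T i j‖ ^ 2 := by
  have hH := Matrix.isHermitian_mul_conjTranspose_self T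
  have htr : (T * Tᴴ).trace = ∑ i, ((hH.eigenvalues i : ℝ) : 𝕜) := by
    conv_lhs => rw [hH.spectral_theorem]
    rw [Unitary.conjStarAlgAut_apply, Matrix.trace_mul_comm, ← Matrix.mul_assoc,
      (Matrix.mem_unitaryGroup_iff').mp hH.eigenvectorUnitary.2, Matrix.one_mul,
      Matrix.trace_diagonal]
    rfl
  have htr2 : (T * Tᴴ).trace = ((∑ i, ∑ j, ‖T i j‖ ^ 2 : ℝ) : 𝕜) := by
    rw [Matrix.trace]
    push_cast
    refine Finset.sum_congr rfl fun i _ => ?_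
    simp only [Matrix.diag_apply, Matrix.mul_apply, Matrix.conjTranspose_apply]
    refine Finset.sum_congr rfl fun j _ => ?_
    rw [RCLike.star_def, RCLike.mul_conj]
  have hkey : (∑ i, hH.eigenvalues i) = ∑ i, ∑ j, ‖T i j‖ ^ 2 := by
    have := htr.symm.trans htr2
    exact_mod_cast this
  calc ∑ i, singVals T i ^ 2 = ∑ i, hH.eigenvalues i :=
        Finset.sum_congr rfl fun i _ => sq_singVals T i
    _ = _ := hkey


lemma frob_sq {T : Matrix (Fin n) (Fin n) 𝕜} (h : frobNorm T = 1) :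
    ∑ i, ∑ j, ‖T i j‖ ^ 2 = 1 := by
  have h0 : (0:ℝ) ≤ ∑ i, ∑ j, ‖T i j‖ ^ 2 := by positivity
  have h2 := Real.sq_sqrt h0
  rw [frobNorm] at h
  rw [h] at h2
  simpa using h2.symm

lemma sum_sq_one {T : Matrix (Fin n) (Fin n) 𝕜} (h : frobNorm T = 1) :
    ∑ i, singVals T i ^ 2 = 1 := by rw [sum_sq_singVals, frob_sq h]

lemma nuclear_le_sqrt (T : Matrix (Fin n) (Fin n) 𝕜) (h : frobNorm T = 1) :
    nuclearNormM T ≤ Real.sqrt n := by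
  have hcs : (∑ i, singVals T i) ^ 2 ≤ (n : ℝ) := by
    calc (∑ i, singVals T i)^2
        ≤ (Finset.univ.card : ℝ) * ∑ i, singVals T i ^ 2 :=
          sq_sum_le_card_mul_sum_sq
      _ = n := by rw [sum_sq_one h]; simp
  rw [nuclearNormM]
  exact (Real.le_sqrt (Finset.sum_nonneg fun i _ => singVals_nonneg T i)
    (by positivity)).mpr hcs

lemma eig_const (hn : 0 < n) {T : Matrix (Fin n) (Fin n) 𝕜} {c : ℝ} (hc : 0 ≤ c)
    (h : T * Tᴴ = ((c ^ 2 : ℝ) : 𝕜) • (1 : Matrix (Fin n) (Fin n) 𝕜)) (i : Fin n) :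
    singVals T i = c := by
  haveI : Nonempty (Fin n) := ⟨⟨0, hn⟩⟩
  have halg : T * Tᴴ = algebraMap ℝ (Matrix (Fin n) (Fin n) 𝕜) (c ^ 2) := by
    rw [h, Algebra.algebraMap_eq_smul_one, RCLike.real_smul_eq_coe_smul (K := 𝕜)]
  have hs := (Matrix.isHermitian_mul_conjTranspose_self T).eigenvalues_mem_spectrum_real i
  have hspec : spectrum ℝ (T * Tᴴ) = {c ^ 2} := by
    rw [halg]; exact spectrum.scalar_eq _
  rw [hspec, Set.mem_singleton_iff] at hs
  rw [singVals, hs, Real.sqrt_sq hc]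

lemma nuclear_of_const (hn : 0 < n) {T : Matrix (Fin n) (Fin n) 𝕜} {c : ℝ}
    (hall : ∀ i, singVals T i = c) : nuclearNormM T = n * c := by
  rw [nuclearNormM, Finset.sum_congr rfl fun i _ => hall i, Finset.sum_const,
    Finset.card_univ, Fintype.card_fin, nsmul_eq_mul]

lemma spectral_of_const (hn : 0 < n) {T : Matrix (Fin n) (Fin n) 𝕜} {c : ℝ}
    (hall : ∀ i, singVals T i = c) : spectralNormM T = c := by
  haveI : Nonempty (Fin n) := ⟨⟨0, hn⟩⟩
  rw [spectralNormM]
  simp only [hall]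
  exact ciSup_const


lemma spectral_lb (hn : 0 < n) (T : Matrix (Fin n) (Fin n) 𝕜) (h : frobNorm T = 1) :
    1 / Real.sqrt n ≤ spectralNormM T := by
  haveI : Nonempty (Fin n) := ⟨⟨0, hn⟩⟩
  have hex : ∃ i ∈ Finset.univ, (n:ℝ)⁻¹ ≤ singVals T i ^ 2 := by
    apply Finset.exists_le_of_sum_le Finset.univ_nonempty
    rw [sum_sq_one h, Finset.sum_const, Finset.card_univ, Fintype.card_fin, nsmul_eq_mul,
      mul_inv_cancel₀ (by exact_mod_cast hn.ne' : (n:ℝ) ≠ 0)]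
  obtain ⟨i, -, hi⟩ := hex
  have h2 : 1 / Real.sqrt n ≤ singVals T i := by
    have := Real.sqrt_le_sqrt hi
    rwa [Real.sqrt_inv, Real.sqrt_sq (singVals_nonneg T i), ← one_div] at this
  exact h2.trans (le_ciSup (Set.finite_range _).bddAbove i)

lemma witness_props (𝕜 : Type*) [RCLike 𝕜] {n : ℕ} (hn : 0 < n) :
    ∃ W : Matrix (Fin n) (Fin n) 𝕜, W.transpose = W ∧ frobNorm W = 1 ∧
      nuclearNormM W = Real.sqrt n ∧ spectralNormM W = 1 / Real.sqrt n := by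
  have hnR : (0:ℝ) < n := by exact_mod_cast hn
  have hsp : 0 < Real.sqrt n := Real.sqrt_pos.mpr hnR
  set c : ℝ := (Real.sqrt n)⁻¹ with hc_def
  have hc : 0 ≤ c := by positivity
  have hc2 : c ^ 2 = (n:ℝ)⁻¹ := by rw [hc_def, inv_pow, Real.sq_sqrt hnR.le]
  have hWW : ((c : 𝕜) • 1 : Matrix (Fin n) (Fin n) 𝕜) * ((c : 𝕜) • 1)ᴴ
      = ((c ^ 2 : ℝ) : 𝕜) • (1 : Matrix (Fin n) (Fin n) 𝕜) := by
    rw [Matrix.conjTranspose_smul, Matrix.conjTranspose_one, RCLike.star_def, RCLike.conj_ofReal,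
      Matrix.smul_mul, Matrix.mul_smul, Matrix.one_mul, smul_smul]
    congr 1
    push_cast
    ring
  have hall : ∀ i, singVals ((c : 𝕜) • (1 : Matrix (Fin n) (Fin n) 𝕜)) i = c :=
    eig_const hn hc hWW
  have hfrob : frobNorm ((c : 𝕜) • (1 : Matrix (Fin n) (Fin n) 𝕜)) = 1 := by
    rw [frobNorm]
    have hW : ∀ i j : Fin n, ‖((c : 𝕜) • (1 : Matrix (Fin n) (Fin n) 𝕜)) i j‖ ^ 2
        = if i = j then c ^ 2 else 0 := by
      intro i j
      by_cases hij : i = j <;>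
        simp [Matrix.smul_apply, Matrix.one_apply, hij, norm_smul, RCLike.norm_ofReal,
          abs_of_nonneg hc]
    simp_rw [hW]
    rw [show (∑ i : Fin n, ∑ j : Fin n, if i = j then c^2 else 0) = ∑ _i : Fin n, c^2 by
      refine Finset.sum_congr rfl fun i _ => ?_; simp]
    rw [Finset.sum_const, Finset.card_univ, Fintype.card_fin, nsmul_eq_mul, hc2,
      mul_inv_cancel₀ hnR.ne', Real.sqrt_one]
  have hnc : (n : ℝ) * c = Real.sqrt n := by
    rw [hc_def]
    field_simp
    rw [Real.sq_sqrt hnR.le]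
  refine ⟨((c : 𝕜)) • 1, ?_, hfrob, ?_, ?_⟩
  · rw [Matrix.transpose_smul, Matrix.transpose_one]
  · rw [nuclear_of_const hn hall, hnc]
  · rw [spectral_of_const hn hall, one_div]


lemma singVals_const_of_nuclear (hn : 0 < n) {T : Matrix (Fin n) (Fin n) 𝕜}
    (hf : frobNorm T = 1) (hnuc : nuclearNormM T = Real.sqrt n) (i : Fin n) :
    singVals T i = (Real.sqrt n)⁻¹ := by
  have hnR : (0:ℝ) < n := by exact_mod_cast hn
  have hsp : 0 < Real.sqrt n := Real.sqrt_pos.mpr hnR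
  set c : ℝ := (Real.sqrt n)⁻¹ with hc_def
  have hc2 : (n:ℝ) * c ^ 2 = 1 := by
    rw [hc_def, inv_pow, Real.sq_sqrt hnR.le, mul_inv_cancel₀ hnR.ne']
  have hcs : c * Real.sqrt n = 1 := inv_mul_cancel₀ hsp.ne'
  have hsum : ∑ j, singVals T j = Real.sqrt n := hnuc
  have key : ∑ j, (singVals T j - c) ^ 2 = 0 := by
    have e : ∀ j : Fin n, (singVals T j - c) ^ 2
        = singVals T j ^ 2 - 2 * c * singVals T j + c ^ 2 := fun j => by ring
    rw [Finset.sum_congr rfl fun j _ => e j, Finset.sum_add_distrib, Finset.sum_sub_distrib,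
      ← Finset.mul_sum, sum_sq_one hf, hsum, Finset.sum_const, Finset.card_univ,
      Fintype.card_fin, nsmul_eq_mul]
    nlinarith [hcs, hc2]
  have h0 := (Finset.sum_eq_zero_iff_of_nonneg (fun j _ => sq_nonneg _)).mp key i
    (Finset.mem_univ i)
  have h1 := sq_eq_zero_iff.mp h0
  exact sub_eq_zero.mp h1

lemma mul_conjTranspose_eq_of_const (hn : 0 < n) {T : Matrix (Fin n) (Fin n) 𝕜} {c : ℝ}
    (hall : ∀ i, singVals T i = c) :
    T * Tᴴ = ((c ^ 2 : ℝ) : 𝕜) • (1 : Matrix (Fin n) (Fin n) 𝕜) := by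
  have hH := Matrix.isHermitian_mul_conjTranspose_self T
  have heig : ∀ i, hH.eigenvalues i = c ^ 2 := fun i => by
    rw [← sq_singVals T i, hall i]
  have hd : Matrix.diagonal (RCLike.ofReal ∘ hH.eigenvalues)
      = ((c ^ 2 : ℝ) : 𝕜) • (1 : Matrix (Fin n) (Fin n) 𝕜) := by
    have hfun : RCLike.ofReal ∘ hH.eigenvalues = fun _ : Fin n => ((c ^ 2 : ℝ) : 𝕜) := by
      funext i
      simp [heig i]
    rw [Matrix.smul_one_eq_diagonal, hfun]
  conv_lhs => rw [hH.spectral_theorem]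
  rw [Unitary.conjStarAlgAut_apply, hd, Matrix.mul_smul, Matrix.mul_one, Matrix.smul_mul,
    (Matrix.mem_unitaryGroup_iff).mp hH.eigenvectorUnitary.2]

end Stmt6Aux

/-- `α'(n,2,𝕜) = √n` and `β'(n,2,𝕜) = 1/√n`; moreover for a complex
symmetric `n×n` matrix `S` with `‖S‖ = 1`, `‖S‖₁ = √n` iff `√n · S` is unitary. -/
theorem stmt6 (𝕜 : Type*) [RCLike 𝕜] (n : ℕ) (hn : 2 ≤ n) :
    alphaSymM 𝕜 n = Real.sqrt n ∧ betaSymM 𝕜 n = 1 / Real.sqrt n ∧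
    ∀ S : Matrix (Fin n) (Fin n) ℂ, S.transpose = S → frobNorm S = 1 →
      (nuclearNormM S = Real.sqrt n ↔
        ((Real.sqrt n : ℂ) • S) ∈ Matrix.unitaryGroup (Fin n) ℂ) := by
  have hn0 : 0 < n := lt_of_lt_of_le two_pos hn
  have hnR : (0:ℝ) < n := by exact_mod_cast hn0
  have hsp : 0 < Real.sqrt n := Real.sqrt_pos.mpr hnR
  refine ⟨?_, ?_, ?_⟩
  · obtain ⟨W, hWt, hWf, hWnuc, hWsp⟩ := Stmt6Aux.witness_props 𝕜 hn0
    apply le_antisymm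
    · apply Real.sSup_le
      · rintro r ⟨S, -, hSf, rfl⟩
        exact Stmt6Aux.nuclear_le_sqrt S hSf
      · exact Real.sqrt_nonneg n
    · apply le_csSup
      · exact ⟨Real.sqrt n, by rintro r ⟨S, -, hSf, rfl⟩; exact Stmt6Aux.nuclear_le_sqrt S hSf⟩
      · exact ⟨W, hWt, hWf, hWnuc.symm⟩
  · obtain ⟨W, hWt, hWf, hWnuc, hWsp⟩ := Stmt6Aux.witness_props 𝕜 hn0
    have hbdd : ∀ r ∈ {r : ℝ | ∃ S : Matrix (Fin n) (Fin n) 𝕜, S.transpose = S ∧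
        frobNorm S = 1 ∧ r = spectralNormM S}, 1 / Real.sqrt n ≤ r := by
      rintro r ⟨S, -, hSf, rfl⟩
      exact Stmt6Aux.spectral_lb hn0 S hSf
    apply le_antisymm
    · exact csInf_le ⟨1 / Real.sqrt n, hbdd⟩ ⟨W, hWt, hWf, hWsp.symm⟩
    · exact le_csInf ⟨1 / Real.sqrt n, W, hWt, hWf, hWsp.symm⟩ hbdd
  · intro S hSt hSf
    have hstar : star ((Real.sqrt n : ℂ) • S) = (Real.sqrt n : ℂ) • S.conjTranspose := by
      rw [Matrix.star_eq_conjTranspose, Matrix.conjTranspose_smul, Complex.star_def,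
        Complex.conj_ofReal]
    constructor
    · intro hnuc
      have hall := Stmt6Aux.singVals_const_of_nuclear hn0 hSf hnuc
      have hSS := Stmt6Aux.mul_conjTranspose_eq_of_const hn0 hall
      rw [Matrix.mem_unitaryGroup_iff]
      rw [hstar, Matrix.smul_mul, Matrix.mul_smul, smul_smul, hSS, smul_smul]
      have hone : (Real.sqrt n : ℂ) * (Real.sqrt n : ℂ)
          * (RCLike.ofReal ((((Real.sqrt n)⁻¹ : ℝ) ^ 2 : ℝ)) : ℂ) = 1 := by
        have h : (Real.sqrt n * Real.sqrt n) * (((Real.sqrt n)⁻¹) ^ 2 : ℝ) = 1 := by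
          rw [Real.mul_self_sqrt hnR.le, inv_pow, Real.sq_sqrt hnR.le]
          exact mul_inv_cancel₀ hnR.ne'
        rw [show (RCLike.ofReal : ℝ → ℂ) = Complex.ofReal from rfl]
        exact_mod_cast h
      rw [hone, one_smul]
    · intro hu
      have h1 := Matrix.mem_unitaryGroup_iff.mp hu
      rw [hstar, Matrix.smul_mul, Matrix.mul_smul, smul_smul] at h1
      have hm : ((Real.sqrt n : ℂ) * (Real.sqrt n : ℂ)) = (n : ℂ) := by
        rw [← Complex.ofReal_mul, Real.mul_self_sqrt hnR.le]
        norm_num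
      rw [hm] at h1
      have hne : (n : ℂ) ≠ 0 := by exact_mod_cast hn0.ne'
      have hSS : S * S.conjTranspose = ((((Real.sqrt n)⁻¹ : ℝ) ^ 2 : ℝ) : ℂ) • 1 := by
        have h2 := congrArg (fun M => ((n:ℂ))⁻¹ • M) h1
        simp only [smul_smul, inv_mul_cancel₀ hne, one_smul] at h2
        rw [h2]
        congr 1
        rw [inv_pow, Real.sq_sqrt hnR.le]
        push_cast
        ring
      have hall := Stmt6Aux.eig_const hn0 (by positivity) hSS
      rw [Stmt6Aux.nuclear_of_const hn0 hall]
      field_simp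
      rw [Real.sq_sqrt hnR.le]
end
end

section
/- Let d ≥ 1, n = (n₁,…,n_d) with each n_j ≥ 1, and let A ∈ ℂ^{n×n} be a density tensor. Then ‖A‖_{1,ℂ} ≤ α(n,ℂ)². Moreover, equality holds whenever A = T ⊗ conj(T) for a state T ∈ ℂ^{n₁×⋯×n_d} (‖T‖ = 1) with ‖T‖_{1,ℂ} = α(n,ℂ). -/
open scoped ComplexOrder

noncomputable section


/-- Multi-indices for `ℂ^{n₁ × ⋯ × n_d}`. -/
abbrev MIdx (d : ℕ) (n : Fin d → ℕ) := ∀ j, Fin (n j)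

/-- The trace of a `2d`-mode tensor `A ∈ ℂ^{n×n}`, viewed as a matrix. -/
def traceT {d : ℕ} {n : Fin d → ℕ} (A : MIdx d n → MIdx d n → ℂ) : ℂ :=
  ∑ p, A p p

/-- The nuclear norm of a `2d`-mode tensor `A ∈ ℂ^{n×n}`. -/
def nucNorm2 {d : ℕ} {n : Fin d → ℕ} (A : MIdx d n → MIdx d n → ℂ) : ℝ :=
  sInf {r : ℝ | ∃ (m : ℕ) (x y : Fin m → ∀ j, Fin (n j) → ℂ),
    A = (fun p q => ∑ i, (∏ j, x i j (p j)) * (∏ j, y i j (q j))) ∧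
    r = ∑ i, (∏ j, vnorm (x i j)) * (∏ j, vnorm (y i j))}

/-- A density tensor: hermitian positive semidefinite with trace one. -/
def IsDensity {d : ℕ} {n : Fin d → ℕ} (A : MIdx d n → MIdx d n → ℂ) : Prop :=
  (Matrix.of A).PosSemidef ∧ traceT A = 1

namespace Stmt13Aux

variable {d : ℕ} {n : Fin d → ℕ}

lemma vnorm_nonneg {k : ℕ} (x : Fin k → ℂ) : 0 ≤ vnorm x := Real.sqrt_nonneg _

lemma vnorm_sq {k : ℕ} (x : Fin k → ℂ) : vnorm x ^ 2 = ∑ i, ‖x i‖ ^ 2 :=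
  Real.sq_sqrt (Finset.sum_nonneg fun i _ => by positivity)

lemma vnorm_conj {k : ℕ} (x : Fin k → ℂ) :
    vnorm (fun a => (starRingEnd ℂ) (x a)) = vnorm x := by
  simp [vnorm]

lemma vnorm_mul {k : ℕ} (c : ℂ) (x : Fin k → ℂ) :
    vnorm (fun a => c * x a) = ‖c‖ * vnorm x := by
  unfold vnorm
  rw [← Real.sqrt_sq (norm_nonneg c), ← Real.sqrt_mul (by positivity),
    Finset.mul_sum]
  congr 1
  exact Finset.sum_congr rfl fun i _ => by rw [norm_mul, mul_pow]

lemma hsNorm_nonneg (T : MIdx d n → ℂ) : 0 ≤ hsNorm T := Real.sqrt_nonneg _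

lemma hsNorm_sq (T : MIdx d n → ℂ) : hsNorm T ^ 2 = ∑ i, ‖T i‖ ^ 2 :=
  Real.sq_sqrt (Finset.sum_nonneg fun i _ => by positivity)

lemma hsNorm_eq_zero {T : MIdx d n → ℂ} (h : hsNorm T = 0) : T = 0 := by
  have h2 : ∑ i, ‖T i‖ ^ 2 = 0 := by
    have := hsNorm_sq T; rw [h] at this; simpa using this.symm
  funext p
  have := (Finset.sum_eq_zero_iff_of_nonneg (fun i _ => by positivity)).mp h2 p
    (Finset.mem_univ p)
  simpa using this

lemma hsNorm_rankOne (x : ∀ j, Fin (n j) → ℂ) :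
    hsNorm (rankOne x) = ∏ j, vnorm (x j) := by
  have h1 : ∑ i : MIdx d n, ‖rankOne x i‖ ^ 2 = (∏ j, vnorm (x j)) ^ 2 := by
    rw [← Finset.prod_pow]
    have : ∀ j, vnorm (x j) ^ 2 = ∑ a, ‖x j a‖ ^ 2 := fun j => vnorm_sq _
    simp_rw [this]
    rw [Fintype.prod_sum fun j a => ‖x j a‖ ^ 2]
    congr 1; funext p
    simp [rankOne, norm_prod, Finset.prod_pow]
  rw [hsNorm, h1, Real.sqrt_sq (Finset.prod_nonneg fun j _ => vnorm_nonneg _)]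

lemma tinner_sum_left {m : ℕ} (f : Fin m → MIdx d n → ℂ) (Y : MIdx d n → ℂ) :
    tinner (∑ i, f i) Y = ∑ i, tinner (f i) Y := by
  unfold tinner
  rw [Finset.sum_comm]
  congr 1; funext p
  simp [Finset.sum_mul]

lemma norm_tinner_le (T Y : MIdx d n → ℂ) :
    ‖tinner T Y‖ ≤ hsNorm T * hsNorm Y := by
  let T' : EuclideanSpace ℂ (MIdx d n) := WithLp.toLp 2 T
  let Y' : EuclideanSpace ℂ (MIdx d n) := WithLp.toLp 2 Y
  have h : tinner T Y = inner ℂ Y' T' := by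
    simp [tinner, PiLp.inner_apply, RCLike.inner_apply, mul_comm, T', Y']
  rw [h]
  calc ‖inner ℂ Y' T'‖ ≤ ‖Y'‖ * ‖T'‖ := norm_inner_le_norm _ _
    _ = hsNorm T * hsNorm Y := by
        rw [EuclideanSpace.norm_eq, EuclideanSpace.norm_eq, mul_comm]
        rfl

lemma tinner_self (T : MIdx d n → ℂ) : tinner T T = ((hsNorm T ^ 2 : ℝ) : ℂ) := by
  rw [hsNorm_sq]
  unfold tinner
  push_cast
  exact Finset.sum_congr rfl fun i _ => Complex.mul_conj' _

/-! ### nucNorm basics -/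

def nucSet (T : MIdx d n → ℂ) : Set ℝ :=
  {r : ℝ | ∃ (m : ℕ) (x : Fin m → ∀ j, Fin (n j) → ℂ),
    T = (∑ i, rankOne (x i)) ∧ r = ∑ i, ∏ j, vnorm (x i j)}

lemma nucNorm_eq (T : MIdx d n → ℂ) : nucNorm T = sInf (nucSet T) := rfl

lemma nucSet_nonneg {T : MIdx d n → ℂ} {r : ℝ} (hr : r ∈ nucSet T) : 0 ≤ r := by
  obtain ⟨m, x, -, rfl⟩ := hr
  exact Finset.sum_nonneg fun i _ => Finset.prod_nonneg fun j _ => vnorm_nonneg _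

lemma nucSet_bddBelow (T : MIdx d n → ℂ) : BddBelow (nucSet T) :=
  ⟨0, fun r hr => nucSet_nonneg hr⟩

lemma nucNorm_le_of_mem {T : MIdx d n → ℂ} {r : ℝ} (hr : r ∈ nucSet T) :
    nucNorm T ≤ r := csInf_le (nucSet_bddBelow T) hr

lemma nucNorm_nonneg_of_nonempty {T : MIdx d n → ℂ} (h : (nucSet T).Nonempty) :
    0 ≤ nucNorm T := le_csInf h fun r hr => nucSet_nonneg hr

/-- the scaled basis vector family -/
def xb (hd : 1 ≤ d) (c : ℂ) (p : MIdx d n) : ∀ j, Fin (n j) → ℂ :=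
  fun j a => if a = p j then (if j = (⟨0, hd⟩ : Fin d) then c else 1) else 0

lemma rankOne_xb (hd : 1 ≤ d) (c : ℂ) (p : MIdx d n) :
    rankOne (xb hd c p) = fun q => if q = p then c else 0 := by
  funext q
  by_cases h : q = p
  · subst h
    simp only [rankOne, xb, if_pos rfl]
    exact Fintype.prod_ite_eq' (⟨0, hd⟩ : Fin d) (fun _ => c)
  · obtain ⟨j, hj⟩ : ∃ j, q j ≠ p j := by
      by_contra hc; push_neg at hc; exact h (funext hc)
    rw [if_neg h]
    exact Finset.prod_eq_zero (Finset.mem_univ j) (by simp [xb, hj])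

lemma cost_xb (hd : 1 ≤ d) (c : ℂ) (p : MIdx d n) :
    ∏ j, vnorm (xb hd c p j) = ‖c‖ := by
  have h : ∀ j (v : ℂ), vnorm (fun a => if a = p j then v else 0) = ‖v‖ := by
    intro j v
    unfold vnorm
    rw [show ∑ a, ‖if a = p j then v else 0‖ ^ 2 = ‖v‖ ^ 2 by
      rw [Finset.sum_eq_single (p j)] <;> simp +contextual]
    exact Real.sqrt_sq (norm_nonneg v)
  calc ∏ j, vnorm (xb hd c p j)
      = ∏ j, ‖if j = (⟨0, hd⟩ : Fin d) then c else 1‖ := by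
        exact Finset.prod_congr rfl fun j _ => h j _
    _ = ‖c‖ := by
        simp_rw [apply_ite norm, norm_one]
        exact Fintype.prod_ite_eq' (⟨0, hd⟩ : Fin d) (fun _ => ‖c‖)

lemma nucNorm_le_sum_norm (hd : 1 ≤ d) (T : MIdx d n → ℂ) :
    nucNorm T ≤ ∑ p, ‖T p‖ := by
  apply nucNorm_le_of_mem
  refine ⟨Fintype.card (MIdx d n),
    fun i => xb hd (T ((Fintype.equivFin (MIdx d n)).symm i))
      ((Fintype.equivFin (MIdx d n)).symm i), ?_, ?_⟩
  · funext q
    rw [show (∑ i, rankOne (xb hd (T ((Fintype.equivFin (MIdx d n)).symm i))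
        ((Fintype.equivFin (MIdx d n)).symm i))) q
      = ∑ i, rankOne (xb hd (T ((Fintype.equivFin (MIdx d n)).symm i))
        ((Fintype.equivFin (MIdx d n)).symm i)) q from Finset.sum_apply _ _ _]
    rw [Fintype.sum_equiv (Fintype.equivFin (MIdx d n)).symm _
      (fun p => if q = p then T p else 0) (fun i => by rw [rankOne_xb])]
    simp
  · rw [Fintype.sum_equiv (Fintype.equivFin (MIdx d n)).symm _ (fun p => ‖T p‖)
      (fun i => cost_xb hd _ _)]

lemma nucSet_nonempty (hd : 1 ≤ d) (T : MIdx d n → ℂ) : (nucSet T).Nonempty := by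
  refine ⟨∑ p, ‖T p‖, ?_⟩
  refine ⟨Fintype.card (MIdx d n),
    fun i => xb hd (T ((Fintype.equivFin (MIdx d n)).symm i))
      ((Fintype.equivFin (MIdx d n)).symm i), ?_, ?_⟩
  · funext q
    rw [show (∑ i, rankOne (xb hd (T ((Fintype.equivFin (MIdx d n)).symm i))
        ((Fintype.equivFin (MIdx d n)).symm i))) q
      = ∑ i, rankOne (xb hd (T ((Fintype.equivFin (MIdx d n)).symm i))
        ((Fintype.equivFin (MIdx d n)).symm i)) q from Finset.sum_apply _ _ _]
    rw [Fintype.sum_equiv (Fintype.equivFin (MIdx d n)).symm _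
      (fun p => if q = p then T p else 0) (fun i => by rw [rankOne_xb])]
    simp
  · rw [Fintype.sum_equiv (Fintype.equivFin (MIdx d n)).symm _ (fun p => ‖T p‖)
      (fun i => cost_xb hd _ _)]

lemma nucNorm_nonneg (hd : 1 ≤ d) (T : MIdx d n → ℂ) : 0 ≤ nucNorm T :=
  nucNorm_nonneg_of_nonempty (nucSet_nonempty hd T)

lemma nucNorm_rankOne_le (x : ∀ j, Fin (n j) → ℂ) :
    nucNorm (rankOne x) ≤ ∏ j, vnorm (x j) := by
  apply nucNorm_le_of_mem
  exact ⟨1, fun _ => x, by simp, by simp⟩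

lemma exists_decomp (hd : 1 ≤ d) (T : MIdx d n → ℂ) {ε : ℝ} (hε : 0 < ε) :
    ∃ (m : ℕ) (x : Fin m → ∀ j, Fin (n j) → ℂ),
      T = (∑ i, rankOne (x i)) ∧ ∑ i, ∏ j, vnorm (x i j) < nucNorm T + ε := by
  obtain ⟨r, hr, hlt⟩ := Real.lt_sInf_add_pos (nucSet_nonempty hd T) hε
  obtain ⟨m, x, hx, rfl⟩ := hr
  exact ⟨m, x, hx, hlt⟩

lemma hsNorm_le_nucNorm (hd : 1 ≤ d) (T : MIdx d n → ℂ) :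
    hsNorm T ≤ nucNorm T := by
  apply le_csInf (nucSet_nonempty hd T)
  rintro r ⟨m, x, rfl, rfl⟩
  set S := ∑ i, rankOne (x i) with hS
  rcases eq_or_lt_of_le (hsNorm_nonneg S) with h0 | h0
  · rw [← h0]
    exact Finset.sum_nonneg fun i _ => Finset.prod_nonneg fun j _ => vnorm_nonneg _
  have key : hsNorm S ^ 2 ≤ (∑ i, ∏ j, vnorm (x i j)) * hsNorm S := by
    have h1 : (hsNorm S ^ 2 : ℝ) = ‖tinner S S‖ := by
      rw [tinner_self, Complex.norm_real, Real.norm_of_nonneg (by positivity)]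
    rw [h1, hS, tinner_sum_left]
    calc ‖∑ i, tinner (rankOne (x i)) S‖
        ≤ ∑ i, ‖tinner (rankOne (x i)) S‖ := norm_sum_le _ _
      _ ≤ ∑ i, (∏ j, vnorm (x i j)) * hsNorm S := by
          apply Finset.sum_le_sum
          intro i _
          calc ‖tinner (rankOne (x i)) S‖
              ≤ hsNorm (rankOne (x i)) * hsNorm S := norm_tinner_le _ _
            _ = (∏ j, vnorm (x i j)) * hsNorm S := by rw [hsNorm_rankOne]
      _ = (∑ i, ∏ j, vnorm (x i j)) * hsNorm S := by rw [Finset.sum_mul]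
  rw [pow_two] at key
  exact le_of_mul_le_mul_right key h0

lemma nucNorm_zero : nucNorm (0 : MIdx d n → ℂ) = 0 := by
  have hmem : (0 : ℝ) ∈ nucSet (0 : MIdx d n → ℂ) :=
    ⟨0, fun i => i.elim0, by simp, by simp⟩
  apply le_antisymm (nucNorm_le_of_mem hmem)
  exact le_csInf ⟨0, hmem⟩ fun r hr => nucSet_nonneg hr

lemma nucNorm_add_le (hd : 1 ≤ d) (S T : MIdx d n → ℂ) :
    nucNorm (S + T) ≤ nucNorm S + nucNorm T := by
  apply le_of_forall_pos_le_add
  intro ε hε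
  obtain ⟨m₁, x₁, hx₁, hc₁⟩ := exists_decomp hd S (half_pos hε)
  obtain ⟨m₂, x₂, hx₂, hc₂⟩ := exists_decomp hd T (half_pos hε)
  have hmem : (∑ i : Fin m₁, ∏ j, vnorm (x₁ i j)) +
      (∑ i : Fin m₂, ∏ j, vnorm (x₂ i j)) ∈ nucSet (S + T) := by
    refine ⟨m₁ + m₂, Fin.append x₁ x₂, ?_, ?_⟩
    · rw [hx₁, hx₂]
      funext q
      simp only [Finset.sum_apply, Pi.add_apply]
      rw [Fin.sum_univ_add]
      simp [Fin.append_left, Fin.append_right]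
    · rw [Fin.sum_univ_add]
      simp [Fin.append_left, Fin.append_right]
  calc nucNorm (S + T) ≤ _ := nucNorm_le_of_mem hmem
    _ ≤ nucNorm S + nucNorm T + ε := by
        have := add_lt_add hc₁ hc₂
        linarith

lemma nucNorm_smul_le (hd : 1 ≤ d) (c : ℂ) (T : MIdx d n → ℂ) :
    nucNorm (c • T) ≤ ‖c‖ * nucNorm T := by
  apply le_of_forall_pos_le_add
  intro ε hε
  have hδ : (0 : ℝ) < ε / (‖c‖ + 1) := by positivity
  obtain ⟨m, x, hx, hc⟩ := exists_decomp hd T hδ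
  set j₀ : Fin d := ⟨0, hd⟩
  let x' : Fin m → ∀ j, Fin (n j) → ℂ :=
    fun i j a => (if j = j₀ then c else 1) * x i j a
  have hr1 : ∀ i, rankOne (x' i) = c • rankOne (x i) := by
    intro i
    funext p
    simp only [rankOne, Pi.smul_apply, smul_eq_mul, x']
    rw [Finset.prod_mul_distrib]
    congr 1
    exact Fintype.prod_ite_eq' j₀ (fun _ => c)
  have hv : ∀ i, (∏ j, vnorm (x' i j)) = ‖c‖ * ∏ j, vnorm (x i j) := by
    intro i
    have : ∀ j, vnorm (x' i j) = ‖if j = j₀ then c else 1‖ * vnorm (x i j) :=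
      fun j => vnorm_mul _ _
    simp_rw [this]
    rw [Finset.prod_mul_distrib]
    congr 1
    simp_rw [apply_ite norm, norm_one]
    exact Fintype.prod_ite_eq' j₀ (fun _ => ‖c‖)
  have hmem : (∑ i, ∏ j, vnorm (x' i j)) ∈ nucSet (c • T) := by
    refine ⟨m, x', ?_, rfl⟩
    funext q
    simp only [Finset.sum_apply, Pi.smul_apply, smul_eq_mul]
    rw [hx]
    simp only [Finset.sum_apply]
    rw [Finset.mul_sum]
    exact Finset.sum_congr rfl fun i _ => by rw [hr1 i]; rfl
  calc nucNorm (c • T) ≤ ∑ i, ∏ j, vnorm (x' i j) := nucNorm_le_of_mem hmem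
    _ = ‖c‖ * ∑ i, ∏ j, vnorm (x i j) := by
        simp_rw [hv]; rw [Finset.mul_sum]
    _ ≤ ‖c‖ * (nucNorm T + ε / (‖c‖ + 1)) := by
        apply mul_le_mul_of_nonneg_left hc.le (norm_nonneg c)
    _ ≤ ‖c‖ * nucNorm T + ε := by
        rw [mul_add]
        have : ‖c‖ * (ε / (‖c‖ + 1)) ≤ ε := by
          rw [div_eq_inv_mul, ← mul_assoc]
          have h1 : ‖c‖ * (‖c‖ + 1)⁻¹ ≤ 1 := by
            rw [mul_inv_le_iff₀ (by positivity)]; linarith [norm_nonneg c]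
          nlinarith [hε.le, norm_nonneg c]
        linarith

lemma nucNorm_smul (hd : 1 ≤ d) (c : ℂ) (T : MIdx d n → ℂ) :
    nucNorm (c • T) = ‖c‖ * nucNorm T := by
  rcases eq_or_ne c 0 with rfl | hc
  · simp [nucNorm_zero]
  apply le_antisymm (nucNorm_smul_le hd c T)
  have h2 := nucNorm_smul_le hd c⁻¹ (c • T)
  rw [smul_smul, inv_mul_cancel₀ hc, one_smul] at h2
  rw [norm_inv] at h2
  rw [← mul_le_mul_iff_right₀ (a := ‖c‖⁻¹) (inv_pos.mpr (norm_pos_iff.mpr hc)), ← mul_assoc,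
    inv_mul_cancel₀ (by simpa using hc), one_mul]
  exact h2

/-! ### alpha -/

def alphaSet (d : ℕ) (n : Fin d → ℕ) : Set ℝ :=
  {r : ℝ | ∃ T : (∀ j, Fin (n j)) → ℂ, hsNorm T = 1 ∧ r = nucNorm T}

lemma alphaN_eq : alphaN ℂ d n = sSup (alphaSet d n) := rfl

lemma sum_norm_le (T : MIdx d n → ℂ) :
    ∑ p, ‖T p‖ ≤ Real.sqrt (Fintype.card (MIdx d n)) * hsNorm T := by
  let a : EuclideanSpace ℝ (MIdx d n) := WithLp.toLp 2 (fun p => ‖T p‖)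
  let b : EuclideanSpace ℝ (MIdx d n) := WithLp.toLp 2 (fun _ => (1 : ℝ))
  have h1 : ∑ p, ‖T p‖ = inner ℝ a b := by
    simp [a, b, PiLp.inner_apply, RCLike.inner_apply]
  have h2 : ‖a‖ = hsNorm T := by
    rw [EuclideanSpace.norm_eq]
    simp [a, hsNorm]
  have h3 : ‖b‖ = Real.sqrt (Fintype.card (MIdx d n)) := by
    rw [EuclideanSpace.norm_eq]
    simp [b]
  calc ∑ p, ‖T p‖ = inner ℝ a b := h1
    _ ≤ ‖a‖ * ‖b‖ := real_inner_le_norm a b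
    _ = Real.sqrt (Fintype.card (MIdx d n)) * hsNorm T := by rw [h2, h3, mul_comm]

lemma alphaSet_bddAbove (hd : 1 ≤ d) : BddAbove (alphaSet d n) := by
  refine ⟨Real.sqrt (Fintype.card (MIdx d n)), ?_⟩
  rintro r ⟨T, hT, rfl⟩
  calc nucNorm T ≤ ∑ p, ‖T p‖ := nucNorm_le_sum_norm hd T
    _ ≤ Real.sqrt (Fintype.card (MIdx d n)) * hsNorm T := sum_norm_le T
    _ = Real.sqrt (Fintype.card (MIdx d n)) := by rw [hT, mul_one]

lemma nucNorm_le_alphaN (hd : 1 ≤ d) {T : MIdx d n → ℂ} (hT : hsNorm T = 1) :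
    nucNorm T ≤ alphaN ℂ d n :=
  le_csSup (alphaSet_bddAbove hd) ⟨T, hT, rfl⟩

lemma alphaN_nonneg (hd : 1 ≤ d) (hn : ∀ j, 1 ≤ n j) : 0 ≤ alphaN ℂ d n := by
  let p₀ : MIdx d n := fun j => ⟨0, hn j⟩
  let T : MIdx d n → ℂ := fun p => if p = p₀ then 1 else 0
  have hT : hsNorm T = 1 := by
    unfold hsNorm
    rw [show ∑ i, ‖T i‖ ^ 2 = 1 by
      rw [Finset.sum_eq_single p₀] <;> simp +contextual [T]]
    exact Real.sqrt_one
  calc (0 : ℝ) ≤ nucNorm T := nucNorm_nonneg hd T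
    _ ≤ alphaN ℂ d n := nucNorm_le_alphaN hd hT

/-! ### dual witness via Hahn–Banach -/

lemma nucNorm_neg (hd : 1 ≤ d) (T : MIdx d n → ℂ) : nucNorm (-T) = nucNorm T := by
  rw [show (-T) = (-1 : ℂ) • T by funext p; simp, nucNorm_smul hd]
  simp

end Stmt13Aux

def NucAux (d : ℕ) (n : Fin d → ℕ) : Type := MIdx d n → ℂ

instance {d : ℕ} {n : Fin d → ℕ} : AddCommGroup (NucAux d n) := Pi.addCommGroup

instance {d : ℕ} {n : Fin d → ℕ} : Module ℂ (NucAux d n) := Pi.module _ _ _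

namespace Stmt13Aux

variable {d : ℕ} {n : Fin d → ℕ}

lemma exists_dual (hd : 1 ≤ d) (T : MIdx d n → ℂ) (hT : T ≠ 0) :
    ∃ B : MIdx d n → ℂ, (∀ S : MIdx d n → ℂ, ‖tinner S B‖ ≤ nucNorm S) ∧
      tinner T B = ((nucNorm T : ℝ) : ℂ) := by
  letI : NormedAddCommGroup (NucAux d n) := AddGroupNorm.toNormedAddCommGroup
    { toFun := fun S => nucNorm (show MIdx d n → ℂ from S)
      map_zero' := nucNorm_zero
      add_le' := fun S T => nucNorm_add_le hd S T
      neg' := fun S => nucNorm_neg hd S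
      eq_zero_of_map_eq_zero' := fun S h => by
        have h0 : nucNorm (show MIdx d n → ℂ from S) = 0 := h
        have h1 := hsNorm_le_nucNorm hd (show MIdx d n → ℂ from S)
        rw [h0] at h1
        exact hsNorm_eq_zero (le_antisymm h1 (hsNorm_nonneg _)) }
  letI : NormedSpace ℂ (NucAux d n) := ⟨fun c S => le_of_eq (nucNorm_smul hd c S)⟩
  obtain ⟨g, hg1, hg2⟩ := exists_dual_vector ℂ (show NucAux d n from T) (norm_ne_zero_iff.mpr hT)
  refine ⟨fun i => (starRingEnd ℂ) (g (Pi.single i 1)), ?_, ?_⟩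
  · intro S
    have hrepr : (show NucAux d n from S) = ∑ i, S i • (show NucAux d n from Pi.single i (1:ℂ)) := by
      funext p
      show S p = (∑ i, S i • (Pi.single i (1:ℂ) : MIdx d n → ℂ)) p
      rw [Finset.sum_apply]
      simp [Pi.single_apply]
    have hgS : g (show NucAux d n from S) = ∑ i, S i * g (Pi.single i 1) := by
      conv_lhs => rw [hrepr]
      rw [map_sum]
      exact Finset.sum_congr rfl fun i _ => by rw [map_smul, smul_eq_mul]
    have htS : tinner S (fun i => (starRingEnd ℂ) (g (Pi.single i 1)))
        = g (show NucAux d n from S) := by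
      rw [hgS]
      unfold tinner
      exact Finset.sum_congr rfl fun i _ => by rw [RingHomCompTriple.comp_apply]; simp
    rw [htS]
    calc ‖g (show NucAux d n from S)‖ ≤ ‖g‖ * ‖(show NucAux d n from S)‖ :=
          g.le_opNorm _
      _ = nucNorm S := by rw [hg1, one_mul]; rfl
  · have hrepr : (show NucAux d n from T) = ∑ i, T i • (show NucAux d n from Pi.single i (1:ℂ)) := by
      funext p
      show T p = (∑ i, T i • (Pi.single i (1:ℂ) : MIdx d n → ℂ)) p
      rw [Finset.sum_apply]
      simp [Pi.single_apply]
    have hgS : g (show NucAux d n from T) = ∑ i, T i * g (Pi.single i 1) := by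
      conv_lhs => rw [hrepr]
      rw [map_sum]
      exact Finset.sum_congr rfl fun i _ => by rw [map_smul, smul_eq_mul]
    have htS : tinner T (fun i => (starRingEnd ℂ) (g (Pi.single i 1)))
        = g (show NucAux d n from T) := by
      rw [hgS]
      unfold tinner
      exact Finset.sum_congr rfl fun i _ => by simp
    rw [htS, hg2]
    rfl

/-! ### nucNorm2 -/

def nuc2Set (A : MIdx d n → MIdx d n → ℂ) : Set ℝ :=
  {r : ℝ | ∃ (m : ℕ) (x y : Fin m → ∀ j, Fin (n j) → ℂ),
    A = (fun p q => ∑ i, (∏ j, x i j (p j)) * (∏ j, y i j (q j))) ∧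
    r = ∑ i, (∏ j, vnorm (x i j)) * (∏ j, vnorm (y i j))}

lemma nucNorm2_eq (A : MIdx d n → MIdx d n → ℂ) : nucNorm2 A = sInf (nuc2Set A) := rfl

lemma nuc2Set_nonneg {A : MIdx d n → MIdx d n → ℂ} {r : ℝ} (hr : r ∈ nuc2Set A) :
    0 ≤ r := by
  obtain ⟨m, x, y, -, rfl⟩ := hr
  exact Finset.sum_nonneg fun i _ => mul_nonneg
    (Finset.prod_nonneg fun j _ => vnorm_nonneg _)
    (Finset.prod_nonneg fun j _ => vnorm_nonneg _)

lemma nuc2Set_bddBelow (A : MIdx d n → MIdx d n → ℂ) : BddBelow (nuc2Set A) :=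
  ⟨0, fun r hr => nuc2Set_nonneg hr⟩

lemma nuc2Set_nonempty (hd : 1 ≤ d) (A : MIdx d n → MIdx d n → ℂ) :
    (nuc2Set A).Nonempty := by
  classical
  let e : Fin (Fintype.card (MIdx d n × MIdx d n)) ≃ MIdx d n × MIdx d n :=
    (Fintype.equivFin _).symm
  refine ⟨∑ i, (∏ j, vnorm (xb hd (A (e i).1 (e i).2) (e i).1 j)) *
      (∏ j, vnorm (xb hd 1 (e i).2 j)),
    Fintype.card (MIdx d n × MIdx d n),
    fun i => xb hd (A (e i).1 (e i).2) (e i).1,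
    fun i => xb hd 1 (e i).2, ?_, rfl⟩
  funext p q
  have h1 : ∀ i, (∏ j, xb hd (A (e i).1 (e i).2) (e i).1 j (p j)) *
      (∏ j, xb hd 1 (e i).2 j (q j)) =
      (if p = (e i).1 then A (e i).1 (e i).2 else 0) *
      (if q = (e i).2 then 1 else 0) := by
    intro i
    have ha := congrFun (rankOne_xb hd (A (e i).1 (e i).2) (e i).1) p
    have hb := congrFun (rankOne_xb hd (1 : ℂ) (e i).2) q
    simp only [rankOne] at ha hb
    rw [ha, hb]
  simp only [h1]
  rw [Fintype.sum_equiv e _ (fun z => (if p = z.1 then A z.1 z.2 else 0) *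
    (if q = z.2 then 1 else 0)) (fun i => rfl)]
  rw [Fintype.sum_prod_type]
  simp [Finset.sum_ite_eq']

lemma nucNorm2_le_of_mem {A : MIdx d n → MIdx d n → ℂ} {r : ℝ}
    (hr : r ∈ nuc2Set A) : nucNorm2 A ≤ r := csInf_le (nuc2Set_bddBelow A) hr

lemma conj_prod_eq (y : ∀ j, Fin (n j) → ℂ) (q : MIdx d n) :
    (starRingEnd ℂ) (∏ j, y j (q j)) = ∏ j, (starRingEnd ℂ) (y j (q j)) :=
  map_prod _ _ _

/-- Upper bound for `nucNorm2` from a Gram-type representation. -/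
lemma nucNorm2_le_sum_sq (hd : 1 ≤ d) (A : MIdx d n → MIdx d n → ℂ) (K : ℕ)
    (w : Fin K → MIdx d n → ℂ)
    (hAw : ∀ p q, A p q = ∑ k, w k p * (starRingEnd ℂ) (w k q)) :
    nucNorm2 A ≤ ∑ k, nucNorm (w k) ^ 2 := by
  classical
  apply le_of_forall_pos_le_add
  intro ε hε
  set s := ∑ k, nucNorm (w k) with hsdef
  have hs : 0 ≤ s := Finset.sum_nonneg fun k _ => nucNorm_nonneg hd _
  set δ := min 1 (ε / (2 * s + K + 1)) with hδdef
  have hδpos : 0 < δ := lt_min one_pos (by positivity)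
  have hδ1 : δ ≤ 1 := min_le_left _ _
  have hδ2 : δ ≤ ε / (2 * s + K + 1) := min_le_right _ _
  choose m x hx hc using fun k => exists_decomp hd (w k) hδpos
  let I := Σ k : Fin K, Fin (m k) × Fin (m k)
  let e : Fin (Fintype.card I) ≃ I := (Fintype.equivFin I).symm
  let X : Fin (Fintype.card I) → ∀ j, Fin (n j) → ℂ := fun i => x (e i).1 (e i).2.1
  let Y : Fin (Fintype.card I) → ∀ j, Fin (n j) → ℂ :=
    fun i j a => (starRingEnd ℂ) (x (e i).1 (e i).2.2 j a)
  have hmem : (∑ i, (∏ j, vnorm (X i j)) * (∏ j, vnorm (Y i j))) ∈ nuc2Set A := by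
    refine ⟨Fintype.card I, X, Y, ?_, rfl⟩
    funext p q
    rw [hAw p q]
    rw [Fintype.sum_equiv e _ (fun z : I =>
      (∏ j, x z.1 z.2.1 j (p j)) * ∏ j, (starRingEnd ℂ) (x z.1 z.2.2 j (q j)))
      (fun i => rfl)]
    rw [← Finset.univ_sigma_univ, Finset.sum_sigma]
    refine Finset.sum_congr rfl fun k _ => ?_
    rw [Fintype.sum_prod_type]
    have hw : ∀ p', w k p' = ∑ i, ∏ j, x k i j (p' j) := by
      intro p'
      rw [hx k]
      rw [Finset.sum_apply]
      rfl
    rw [hw p, hw q]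
    rw [map_sum, Finset.sum_mul]
    refine Finset.sum_congr rfl fun i _ => ?_
    rw [Finset.mul_sum]
    refine Finset.sum_congr rfl fun i' _ => ?_
    rw [conj_prod_eq]
  refine le_trans (nucNorm2_le_of_mem hmem) ?_
  have hcost : (∑ i, (∏ j, vnorm (X i j)) * (∏ j, vnorm (Y i j)))
      = ∑ k, (∑ i, ∏ j, vnorm (x k i j)) ^ 2 := by
    rw [Fintype.sum_equiv e _ (fun z : I =>
      (∏ j, vnorm (x z.1 z.2.1 j)) * (∏ j, vnorm (fun a => (starRingEnd ℂ) (x z.1 z.2.2 j a))))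
      (fun i => rfl)]
    rw [← Finset.univ_sigma_univ, Finset.sum_sigma]
    refine Finset.sum_congr rfl fun k _ => ?_
    rw [Fintype.sum_prod_type]
    rw [pow_two, Finset.sum_mul_sum]
    refine Finset.sum_congr rfl fun i _ => ?_
    refine Finset.sum_congr rfl fun i' _ => ?_
    congr 1
    exact Finset.prod_congr rfl fun j _ => vnorm_conj _
  rw [hcost]
  have hk : ∀ k, (∑ i, ∏ j, vnorm (x k i j)) ^ 2 ≤ nucNorm (w k) ^ 2 + δ * (2 * nucNorm (w k) + 1) := by
    intro k
    have h1 : (∑ i, ∏ j, vnorm (x k i j)) ≤ nucNorm (w k) + δ := (hc k).le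
    have h2 : 0 ≤ ∑ i, ∏ j, vnorm (x k i j) :=
      Finset.sum_nonneg fun i _ => Finset.prod_nonneg fun j _ => vnorm_nonneg _
    have h3 : 0 ≤ nucNorm (w k) := nucNorm_nonneg hd _
    nlinarith
  calc ∑ k, (∑ i, ∏ j, vnorm (x k i j)) ^ 2
      ≤ ∑ k, (nucNorm (w k) ^ 2 + δ * (2 * nucNorm (w k) + 1)) :=
        Finset.sum_le_sum fun k _ => hk k
    _ = (∑ k, nucNorm (w k) ^ 2) + δ * (2 * s + K) := by
        rw [Finset.sum_add_distrib]
        congr 1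
        rw [← Finset.mul_sum]
        congr 1
        rw [Finset.sum_add_distrib, Finset.mul_sum]
        simp [hsdef, Finset.mul_sum, mul_comm]
    _ ≤ (∑ k, nucNorm (w k) ^ 2) + ε := by
        have hK : (0 : ℝ) ≤ K := Nat.cast_nonneg K
        have hcpos : (0 : ℝ) < 2 * s + K + 1 := by positivity
        have h5 : δ * (2 * s + K + 1) ≤ ε := (le_div_iff₀ hcpos).mp hδ2
        nlinarith [hδpos.le]

/-! ### lower bound pairing -/

lemma triple_rearrange {m : ℕ} (f g : Fin m → MIdx d n → ℂ) (u v : MIdx d n → ℂ) :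
    ∑ p, ∑ q, (∑ i, f i p * g i q) * (u p * v q) =
      ∑ i, (∑ p, f i p * u p) * (∑ q, g i q * v q) := by
  have h1 : ∀ p : MIdx d n, ∑ q, (∑ i, f i p * g i q) * (u p * v q) =
      ∑ i, ∑ q, (f i p * g i q) * (u p * v q) := by
    intro p
    rw [Finset.sum_comm]
    exact Finset.sum_congr rfl fun q _ => by rw [Finset.sum_mul]
  simp_rw [h1]
  rw [Finset.sum_comm]
  refine Finset.sum_congr rfl fun i _ => ?_
  rw [Finset.sum_mul_sum]
  exact Finset.sum_congr rfl fun p _ => Finset.sum_congr rfl fun q _ => by ring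

lemma norm_sq_tinner_le_nucNorm2 (hd : 1 ≤ d) (T B : MIdx d n → ℂ)
    (hB : ∀ S : MIdx d n → ℂ, ‖tinner S B‖ ≤ nucNorm S) :
    ‖tinner T B‖ ^ 2 ≤ nucNorm2 (fun p q => T p * (starRingEnd ℂ) (T q)) := by
  rw [nucNorm2_eq]
  apply le_csInf (nuc2Set_nonempty hd _)
  rintro r ⟨m, x, y, hxy, rfl⟩
  set P : ℂ := ∑ p, ∑ q, (T p * (starRingEnd ℂ) (T q)) *
    ((starRingEnd ℂ) (B p) * B q) with hP
  have h1 : P = tinner T B * (starRingEnd ℂ) (tinner T B) := by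
    have e1 : P = (∑ p, T p * (starRingEnd ℂ) (B p)) *
        (∑ q, (starRingEnd ℂ) (T q) * B q) := by
      rw [hP, Finset.sum_mul_sum]
      exact Finset.sum_congr rfl fun p _ => Finset.sum_congr rfl fun q _ => by ring
    have e2 : (∑ q, (starRingEnd ℂ) (T q) * B q) = (starRingEnd ℂ) (tinner T B) := by
      unfold tinner
      rw [map_sum]
      exact Finset.sum_congr rfl fun q _ => by simp [mul_comm]
    rw [e1, e2]
    rfl
  have h2 : P = ∑ i, (∑ p, (∏ j, x i j (p j)) * (starRingEnd ℂ) (B p)) *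
      (∑ q, (∏ j, y i j (q j)) * B q) := by
    rw [hP]
    have : ∀ p q, T p * (starRingEnd ℂ) (T q) =
        ∑ i, (∏ j, x i j (p j)) * (∏ j, y i j (q j)) :=
      fun p q => congrFun (congrFun hxy p) q
    calc ∑ p, ∑ q, (T p * (starRingEnd ℂ) (T q)) * ((starRingEnd ℂ) (B p) * B q)
        = ∑ p, ∑ q, (∑ i, (∏ j, x i j (p j)) * (∏ j, y i j (q j))) *
            ((starRingEnd ℂ) (B p) * B q) := by
          refine Finset.sum_congr rfl fun p _ => Finset.sum_congr rfl fun q _ => ?_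
          rw [show T p * (starRingEnd ℂ) (T q) =
            ∑ i, (∏ j, x i j (p j)) * (∏ j, y i j (q j)) from this p q]
      _ = _ := triple_rearrange (fun i p => ∏ j, x i j (p j))
            (fun i q => ∏ j, y i j (q j)) (fun p => (starRingEnd ℂ) (B p)) B
  have hF : ∀ i, ‖∑ p, (∏ j, x i j (p j)) * (starRingEnd ℂ) (B p)‖ ≤
      ∏ j, vnorm (x i j) := by
    intro i
    have : (∑ p, (∏ j, x i j (p j)) * (starRingEnd ℂ) (B p)) = tinner (rankOne (x i)) B := rfl
    rw [this]
    exact le_trans (hB _) (nucNorm_rankOne_le _)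
  have hG : ∀ i, ‖∑ q, (∏ j, y i j (q j)) * B q‖ ≤ ∏ j, vnorm (y i j) := by
    intro i
    have hconj : (starRingEnd ℂ) (∑ q, (∏ j, y i j (q j)) * B q) =
        tinner (rankOne (fun j a => (starRingEnd ℂ) (y i j a))) B := by
      rw [map_sum]
      refine Finset.sum_congr rfl fun q _ => ?_
      rw [map_mul]
      congr 1
      · exact (conj_prod_eq (y i) q)
    calc ‖∑ q, (∏ j, y i j (q j)) * B q‖
        = ‖(starRingEnd ℂ) (∑ q, (∏ j, y i j (q j)) * B q)‖ := (RCLike.norm_conj _).symm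
      _ = ‖tinner (rankOne (fun j a => (starRingEnd ℂ) (y i j a))) B‖ := by rw [hconj]
      _ ≤ nucNorm (rankOne (fun j a => (starRingEnd ℂ) (y i j a))) := hB _
      _ ≤ ∏ j, vnorm (fun a => (starRingEnd ℂ) (y i j a)) := nucNorm_rankOne_le _
      _ = ∏ j, vnorm (y i j) := Finset.prod_congr rfl fun j _ => vnorm_conj _
  calc ‖tinner T B‖ ^ 2 = ‖P‖ := by
        rw [h1, norm_mul, RCLike.norm_conj, pow_two]
    _ ≤ ∑ i, (∏ j, vnorm (x i j)) * (∏ j, vnorm (y i j)) := by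
        rw [h2]
        refine le_trans (norm_sum_le _ _) (Finset.sum_le_sum fun i _ => ?_)
        rw [norm_mul]
        exact mul_le_mul (hF i) (hG i) (norm_nonneg _) (Finset.prod_nonneg fun j _ => vnorm_nonneg _)

/-! ### spectral decomposition of a density tensor -/

lemma density_gram (hd : 1 ≤ d) (hn : ∀ j, 1 ≤ n j)
    (A : MIdx d n → MIdx d n → ℂ) (hA : IsDensity A) :
    ∃ (K : ℕ) (w : Fin K → MIdx d n → ℂ),
      (∀ p q, A p q = ∑ k, w k p * (starRingEnd ℂ) (w k q)) ∧
      (∑ k, nucNorm (w k) ^ 2) ≤ alphaN ℂ d n ^ 2 := by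
  classical
  set M : Matrix (MIdx d n) (MIdx d n) ℂ := Matrix.of A with hM
  have hH : M.IsHermitian := hA.1.1
  set U : Matrix (MIdx d n) (MIdx d n) ℂ :=
    (Matrix.IsHermitian.eigenvectorUnitary hH : Matrix (MIdx d n) (MIdx d n) ℂ) with hU
  set lam : MIdx d n → ℝ := hH.eigenvalues with hlam
  have hlam0 : ∀ k, 0 ≤ lam k := fun k => hA.1.eigenvalues_nonneg k
  set D : Matrix (MIdx d n) (MIdx d n) ℂ :=
    Matrix.diagonal (RCLike.ofReal ∘ lam) with hD
  have hentry : ∀ p q, A p q = ∑ k, U p k * (lam k : ℂ) * (starRingEnd ℂ) (U q k) := by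
    intro p q
    have h0 : M = U * D * star U := hH.spectral_theorem
    have h1 : M p q = (U * D * star U) p q := by rw [← h0]
    calc A p q = M p q := rfl
      _ = ∑ k, (U * D) p k * (star U) k q := by
          rw [h1, Matrix.mul_apply]
      _ = ∑ k, U p k * (lam k : ℂ) * (starRingEnd ℂ) (U q k) := by
          refine Finset.sum_congr rfl fun k _ => ?_
          rw [hD, Matrix.mul_diagonal, Matrix.star_apply]
          rfl
  have hcol : ∀ k, ∑ p, ‖U p k‖ ^ 2 = 1 := by
    intro k
    have h1 : star U * U = 1 :=
      (Matrix.mem_unitaryGroup_iff').mp (Matrix.IsHermitian.eigenvectorUnitary hH).2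
    have h2 : (star U * U) k k = 1 := by rw [h1]; simp
    rw [Matrix.mul_apply] at h2
    have h3 : ∀ p, (star U) k p * U p k = ((‖U p k‖ ^ 2 : ℝ) : ℂ) := by
      intro p
      rw [Matrix.star_apply, show (star (U p k)) = (starRingEnd ℂ) (U p k) from rfl,
        mul_comm, Complex.mul_conj']
      norm_cast
    rw [Finset.sum_congr rfl fun p _ => h3 p] at h2
    have h4 : ((∑ p, ‖U p k‖ ^ 2 : ℝ) : ℂ) = 1 := by rw [Complex.ofReal_sum]; exact h2
    exact_mod_cast h4
  have htr : ∑ k, lam k = 1 := by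
    have h1 : traceT A = 1 := hA.2
    have h2 : traceT A = ((∑ k, lam k : ℝ) : ℂ) := by
      unfold traceT
      rw [Finset.sum_congr rfl fun p _ => hentry p p, Finset.sum_comm,
        Complex.ofReal_sum]
      refine Finset.sum_congr rfl fun k _ => ?_
      have h5 : ∀ p, U p k * (lam k : ℂ) * (starRingEnd ℂ) (U p k)
          = (lam k : ℂ) * ((‖U p k‖ ^ 2 : ℝ) : ℂ) := fun p => by
        rw [mul_comm (U p k) ((lam k : ℂ)), mul_assoc, Complex.mul_conj']
        norm_cast
      rw [Finset.sum_congr rfl fun p _ => h5 p, ← Finset.mul_sum,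
        ← Complex.ofReal_sum, hcol k, Complex.ofReal_one, mul_one]
    rw [h2] at h1
    exact_mod_cast h1
  let e : Fin (Fintype.card (MIdx d n)) ≃ MIdx d n := (Fintype.equivFin _).symm
  refine ⟨Fintype.card (MIdx d n),
    fun k p => ((Real.sqrt (lam (e k)) : ℝ) : ℂ) * U p (e k), ?_, ?_⟩
  · intro p q
    rw [hentry p q]
    refine (Fintype.sum_equiv e _ _ (fun k => ?_)).symm
    have hss : ((Real.sqrt (lam (e k)) : ℝ) : ℂ) * ((Real.sqrt (lam (e k)) : ℝ) : ℂ)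
        = ((lam (e k) : ℝ) : ℂ) := by
      rw [← Complex.ofReal_mul, Real.mul_self_sqrt (hlam0 _)]
    calc ((Real.sqrt (lam (e k)) : ℝ) : ℂ) * U p (e k) *
          (starRingEnd ℂ) (((Real.sqrt (lam (e k)) : ℝ) : ℂ) * U q (e k))
        = (((Real.sqrt (lam (e k)) : ℝ) : ℂ) * ((Real.sqrt (lam (e k)) : ℝ) : ℂ)) *
            (U p (e k) * (starRingEnd ℂ) (U q (e k))) := by
          rw [map_mul, Complex.conj_ofReal]; ring
      _ = U p (e k) * ((lam (e k) : ℝ) : ℂ) * (starRingEnd ℂ) (U q (e k)) := by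
          rw [hss]; ring
  · have hv : ∀ k : Fin (Fintype.card (MIdx d n)),
        nucNorm (fun p => U p (e k)) ≤ alphaN ℂ d n := by
      intro k
      apply nucNorm_le_alphaN hd
      unfold hsNorm
      rw [show ∑ i, ‖U i (e k)‖ ^ 2 = 1 from hcol (e k)]
      exact Real.sqrt_one
    have hw : ∀ k, nucNorm (fun p => ((Real.sqrt (lam (e k)) : ℝ) : ℂ) * U p (e k))
        = Real.sqrt (lam (e k)) * nucNorm (fun p => U p (e k)) := by
      intro k
      have h6 := nucNorm_smul hd ((Real.sqrt (lam (e k)) : ℂ)) (fun p => U p (e k))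
      rw [show (((Real.sqrt (lam (e k)) : ℝ) : ℂ) • fun p => U p (e k))
          = fun p => ((Real.sqrt (lam (e k)) : ℝ) : ℂ) * U p (e k) from rfl] at h6
      rw [h6, Complex.norm_real, Real.norm_of_nonneg (Real.sqrt_nonneg _)]
    calc ∑ k, nucNorm (fun p => ((Real.sqrt (lam (e k)) : ℝ) : ℂ) * U p (e k)) ^ 2
        ≤ ∑ k, lam (e k) * alphaN ℂ d n ^ 2 := by
          refine Finset.sum_le_sum fun k _ => ?_
          rw [hw k, mul_pow, Real.sq_sqrt (hlam0 _)]
          exact mul_le_mul_of_nonneg_left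
            (pow_le_pow_left₀ (nucNorm_nonneg hd _) (hv k) 2) (hlam0 _)
      _ = (∑ k, lam (e k)) * alphaN ℂ d n ^ 2 := (Finset.sum_mul _ _ _).symm
      _ = 1 * alphaN ℂ d n ^ 2 := by
          rw [Fintype.sum_equiv e _ lam (fun k => rfl), htr]
      _ = alphaN ℂ d n ^ 2 := one_mul _

end Stmt13Aux

/-- A density tensor `A` satisfies `‖A‖₁ ≤ α(n,ℂ)²`, with equality
whenever `A = T ⊗ conj T` for a state `T` of maximal nuclear norm `α(n,ℂ)`. -/
theorem stmt13 (d : ℕ) (hd : 1 ≤ d) (n : Fin d → ℕ) (hn : ∀ j, 1 ≤ n j)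
    (A : MIdx d n → MIdx d n → ℂ) (hA : IsDensity A) :
    nucNorm2 A ≤ (alphaN ℂ d n) ^ 2 ∧
    ∀ T : MIdx d n → ℂ, hsNorm T = 1 → nucNorm T = alphaN ℂ d n →
      A = (fun p q => T p * (starRingEnd ℂ) (T q)) →
      nucNorm2 A = (alphaN ℂ d n) ^ 2 := by
  classical
  have hub : nucNorm2 A ≤ alphaN ℂ d n ^ 2 := by
    obtain ⟨K, w, hw, hcost⟩ := Stmt13Aux.density_gram hd hn A hA
    exact le_trans (Stmt13Aux.nucNorm2_le_sum_sq hd A K w hw) hcost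
  refine ⟨hub, ?_⟩
  intro T hT hnuc hAT
  have hT0 : T ≠ 0 := by
    intro h
    rw [h] at hT
    simp [hsNorm] at hT
  obtain ⟨B, hB1, hB2⟩ := Stmt13Aux.exists_dual hd T hT0
  have hlb : alphaN ℂ d n ^ 2 ≤ nucNorm2 A := by
    have hmain := Stmt13Aux.norm_sq_tinner_le_nucNorm2 hd T B hB1
    have hnorm : ‖tinner T B‖ = alphaN ℂ d n := by
      rw [hB2, Complex.norm_real,
        Real.norm_of_nonneg (Stmt13Aux.nucNorm_nonneg hd T), hnuc]
    rw [hnorm] at hmain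
    rw [hAT]
    exact hmain
  exact le_antisymm hub hlb
end
end
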